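/- arXiv:math/9209216 — 6 statements merged into one kernel-verified Lean document; each statement's English description precedes it below -/
import Mathlib

section
/- If m ∈ ℕ and f₁, f₂ : E → ℂ satisfy |f₁(γ)| = |f₂(γ)| = 1 for all γ ∈ E and both f₁ and f₂ belong to AP(E,m,1/5), then the pointwise product f₁f₂ belongs to AP(E,m²,1/2). -/
open MeasureTheory Complex
open scoped ENNReal NNReal

noncomputable section

/-- The sign `±1` attached to a boolean, as a complex number. -/
def sgn (b : Bool) : ℂ := if b then 1 else -1

/-- `ν` is an `r`-norm on the complex vector space `X`. -/
def IsRNorm {X : Type*} [AddCommGroup X] [Module ℂ X] (r : ℝ) (ν : X → ℝ) : Prop :=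
  (∀ x : X, 0 ≤ ν x) ∧ (∀ x : X, x ≠ 0 → 0 < ν x) ∧
    (∀ (c : ℂ) (x : X), ν (c • x) = ‖c‖ * ν x) ∧
    (∀ x y : X, ν (x + y) ^ r ≤ ν x ^ r + ν y ^ r)

/-- `X` is complete for the metric `d(x,y) = ν(x-y)^r`, i.e. quasi-Banach. -/
def IsRComplete {X : Type*} [AddCommGroup X] [Module ℂ X] (r : ℝ) (ν : X → ℝ) : Prop :=
  ∀ u : ℕ → X, (∀ ε : ℝ, 0 < ε → ∃ N : ℕ, ∀ i ≥ N, ∀ j ≥ N, ν (u i - u j) ^ r < ε) →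
    ∃ x : X, ∀ ε : ℝ, 0 < ε → ∃ N : ℕ, ∀ i ≥ N, ν (u i - x) ^ r < ε

/-- The quasinorm `ν` is plurisubharmonic. -/
def IsPshNorm {X : Type*} [AddCommGroup X] [Module ℂ X] (ν : X → ℝ) : Prop :=
  ∀ x y : X, ν x ≤ (1 / (2 * Real.pi)) *
    ∫ θ in (0 : ℝ)..(2 * Real.pi), ν (x + Complex.exp (θ * Complex.I) • y)

/-- `γ : G → ℂ` is a continuous character of `G`. -/
def IsChar {G : Type*} [CommGroup G] [TopologicalSpace G] (γ : G → ℂ) : Prop :=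
  Continuous γ ∧ (∀ g h : G, γ (g * h) = γ g * γ h) ∧ ∀ g : G, ‖γ g‖ = 1

/-- The `L_p`-mean of `ν (∑ ε_k x_k)` over the Cantor group (the average over all
choices of signs, since the integrand depends on finitely many coordinates);
for `p = ∞` the supremum. -/
def radMean {X : Type*} [AddCommGroup X] [Module ℂ X] (ν : X → ℝ) (p : ℝ≥0∞) {n : ℕ}
    (x : Fin n → X) : ℝ :=
  if p = ⊤ then ⨆ θ : Fin n → Bool, ν (∑ k, sgn (θ k) • x k)
  else ((∑ θ : Fin n → Bool, ν (∑ k, sgn (θ k) • x k) ^ p.toReal) / 2 ^ n) ^ (1 / p.toReal)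

/-- The `L_p`-mean of `ν (∑ γ_k(g) x_k)` over `G`; for `p = ∞` the supremum. -/
def charMean {G : Type*} [MeasurableSpace G] {X : Type*} [AddCommGroup X] [Module ℂ X]
    (μG : Measure G) (ν : X → ℝ) (p : ℝ≥0∞) {n : ℕ} (γ : Fin n → G → ℂ) (x : Fin n → X) : ℝ :=
  if p = ⊤ then ⨆ g : G, ν (∑ k, γ k g • x k)
  else (∫ g, ν (∑ k, γ k g • x k) ^ p.toReal ∂μG) ^ (1 / p.toReal)

/-- `E` has property `𝓒_p(X)` (with quasinorm `ν` on `X`). -/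
def HasPropC {G : Type*} [MeasurableSpace G] {X : Type*} [AddCommGroup X] [Module ℂ X]
    (μG : Measure G) (p : ℝ≥0∞) (E : Set (G → ℂ)) (ν : X → ℝ) : Prop :=
  ∃ M : ℝ, 0 < M ∧ ∀ (n : ℕ) (γ : Fin n → G → ℂ), (∀ k, γ k ∈ E) → Function.Injective γ →
    ∀ x : Fin n → X,
      M⁻¹ * radMean ν p x ≤ charMean μG ν p γ x ∧ charMean μG ν p γ x ≤ M * radMean ν p x

/-- The `L_p`-norm of an `X`-valued function on `G`. -/
def pNorm {G : Type*} [MeasurableSpace G] {X : Type*} [AddCommGroup X] [Module ℂ X]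
    (μG : Measure G) (ν : X → ℝ) (p : ℝ≥0∞) (φ : G → X) : ℝ :=
  if p = ⊤ then ⨆ g : G, ν (φ g) else (∫ g, ν (φ g) ^ p.toReal ∂μG) ^ (1 / p.toReal)

/-- `f` belongs to `AP(E, N, δ)`. -/
def memAP {G : Type*} [CommGroup G] [TopologicalSpace G] (E : Set (G → ℂ)) (N : ℕ) (δ : ℝ)
    (f : (G → ℂ) → ℂ) : Prop :=
  ∃ (g : Fin N → G) (α : Fin N → ℂ), (∀ j, ‖α j‖ ≤ 1) ∧
    ∀ γ ∈ E, ‖f γ - ∑ j, α j * γ (g j)‖ ≤ δ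

/-- `E` is a set of interpolation (`I₀`-set). -/
def IsInterpolationSet {G : Type*} [CommGroup G] [TopologicalSpace G] (E : Set (G → ℂ)) : Prop :=
  ∀ f : (G → ℂ) → ℂ, (∃ B : ℝ, ∀ γ ∈ E, ‖f γ‖ ≤ B) → ∀ ε : ℝ, 0 < ε →
    ∃ (n : ℕ) (α : Fin n → ℂ) (g : Fin n → G),
      ∀ γ ∈ E, ‖f γ - ∑ j, α j * γ (g j)‖ ≤ ε

/-- `E` is a Sidon set. -/
def IsSidonSet {G : Type*} [CommGroup G] [TopologicalSpace G] (E : Set (G → ℂ)) : Prop :=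
  ∃ M : ℝ, 0 < M ∧ ∀ a : (G → ℂ) →₀ ℂ, ↑a.support ⊆ E →
    (∑ γ ∈ a.support, ‖a γ‖) ≤ M * ⨆ g : G, ‖∑ γ ∈ a.support, a γ * γ g‖


/-- If `f₁, f₂ : E → ℂ` are unimodular on `E` and both lie in
`AP(E, m, 1/5)`, then the pointwise product `f₁ f₂` lies in `AP(E, m², 1/2)`. -/
theorem statement2 {G : Type} [CommGroup G] [TopologicalSpace G] [IsTopologicalGroup G]
    [CompactSpace G] (E : Set (G → ℂ)) (hE : ∀ γ ∈ E, IsChar γ) (m : ℕ)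
    (f₁ f₂ : (G → ℂ) → ℂ)
    (h₁ : ∀ γ ∈ E, ‖f₁ γ‖ = 1) (h₂ : ∀ γ ∈ E, ‖f₂ γ‖ = 1)
    (hap₁ : memAP E m (1/5) f₁) (hap₂ : memAP E m (1/5) f₂) :
    memAP E (m ^ 2) (1/2) (fun γ => f₁ γ * f₂ γ) := by
  obtain ⟨g, α, hα, hA⟩ := hap₁
  obtain ⟨h, β, hβ, hB⟩ := hap₂
  have hmm : m ^ 2 = m * m := sq m
  let e : Fin (m ^ 2) ≃ Fin m × Fin m := (finCongr hmm).trans finProdFinEquiv.symm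
  refine ⟨fun i => g (e i).1 * h (e i).2, fun i => α (e i).1 * β (e i).2, ?_, ?_⟩
  · intro i
    rw [norm_mul]
    exact mul_le_one₀ (hα _) (norm_nonneg _) (hβ _)
  · intro γ hγ
    obtain ⟨-, hmul, -⟩ := hE γ hγ
    have hsum : (∑ i, (α (e i).1 * β (e i).2) * γ (g (e i).1 * h (e i).2))
        = (∑ j, α j * γ (g j)) * (∑ k, β k * γ (h k)) := by
      calc ∑ i, (α (e i).1 * β (e i).2) * γ (g (e i).1 * h (e i).2)
          = ∑ p : Fin m × Fin m, (α p.1 * β p.2) * γ (g p.1 * h p.2) :=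
            Fintype.sum_equiv e _ _ (fun i => rfl)
        _ = _ := by
            rw [Finset.sum_mul_sum, ← Finset.univ_product_univ, Finset.sum_product]
            refine Finset.sum_congr rfl fun j _ => Finset.sum_congr rfl fun k _ => ?_
            rw [hmul]; ring
    rw [hsum]
    set S₁ := ∑ j, α j * γ (g j)
    set S₂ := ∑ k, β k * γ (h k)
    have h1 := hA γ hγ
    have h2 := hB γ hγ
    have hS₂ : ‖S₂‖ ≤ 6/5 := by
      calc ‖S₂‖ = ‖f₂ γ - (f₂ γ - S₂)‖ := by ring_nf
        _ ≤ ‖f₂ γ‖ + ‖f₂ γ - S₂‖ := by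
            simpa using norm_sub_le (f₂ γ) (f₂ γ - S₂)
        _ ≤ 1 + 1/5 := by rw [h₂ γ hγ]; linarith
        _ = 6/5 := by norm_num
    have key : f₁ γ * f₂ γ - S₁ * S₂ = f₁ γ * (f₂ γ - S₂) + S₂ * (f₁ γ - S₁) := by ring
    calc ‖f₁ γ * f₂ γ - S₁ * S₂‖
        ≤ ‖f₁ γ * (f₂ γ - S₂)‖ + ‖S₂ * (f₁ γ - S₁)‖ := by
          rw [key]; exact norm_add_le _ _
      _ = ‖f₁ γ‖ * ‖f₂ γ - S₂‖
          + ‖S₂‖ * ‖f₁ γ - S₁‖ := by rw [norm_mul, norm_mul]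
      _ ≤ 1 * (1/5) + (6/5) * (1/5) := by
          rw [h₁ γ hγ]
          gcongr
      _ ≤ 1/2 := by norm_num


end
end

section
/- Suppose N ∈ ℕ is such that every f : E → ℂ with sup_{γ∈E}|f(γ)| ≤ 1 belongs to AP(E,N,1/2). Then for every such f there exist complex numbers (c_j)_{j=1}^∞ with |c_j| ≤ 2·2^{−j/N} for all j and elements (g_j)_{j=1}^∞ of G such that f(γ) = ∑_{j=1}^∞ c_j γ(g_j) for all γ ∈ E. -/
open MeasureTheory Complex
open scoped ENNReal NNReal

noncomputable section

/-- If `N` is such that every `f` in the unit ball of `ℓ∞(E)` lies in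
`AP(E, N, 1/2)`, then every such `f` can be written `f(γ) = ∑_{j≥1} c_j γ(g_j)` with
`|c_j| ≤ 2 ⬝ 2^{-j/N}`. -/
theorem statement3 {G : Type} [CommGroup G] [TopologicalSpace G] [IsTopologicalGroup G]
    [CompactSpace G] (E : Set (G → ℂ)) (hE : ∀ γ ∈ E, IsChar γ) (N : ℕ)
    (h : ∀ f : (G → ℂ) → ℂ, (∀ γ ∈ E, ‖f γ‖ ≤ 1) → memAP E N (1/2) f) :
    ∀ f : (G → ℂ) → ℂ, (∀ γ ∈ E, ‖f γ‖ ≤ 1) →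
      ∃ (c : ℕ → ℂ) (g : ℕ → G),
        (∀ j : ℕ, ‖c j‖ ≤ 2 * (2 : ℝ) ^ (-((j : ℝ) + 1) / (N : ℝ))) ∧
        ∀ γ ∈ E, f γ = ∑' j : ℕ, c j * γ (g j) := by
  intro f hf
  rcases Nat.eq_zero_or_pos N with hN | hN
  · -- N = 0 : then f vanishes on E
    subst hN
    refine ⟨fun _ => 0, fun _ => 1, ?_, ?_⟩
    · intro j
      simp only [norm_zero]
      positivity
    · intro γ hγ
      have key : ∀ n : ℕ, ∀ f' : (G → ℂ) → ℂ, (∀ γ ∈ E, ‖f' γ‖ ≤ 1) →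
          ∀ γ ∈ E, ‖f' γ‖ ≤ (1/2 : ℝ) ^ n := by
        intro n
        induction n with
        | zero => intro f' hf' γ hγ; simpa using hf' γ hγ
        | succ n ih =>
          intro f' hf' γ hγ
          obtain ⟨g0, α0, _, hap⟩ := h f' hf'
          have h2 : ∀ γ' ∈ E, ‖(fun γ'' => 2 * f' γ'') γ'‖ ≤ 1 := by
            intro γ' hγ'
            have := hap γ' hγ'
            simp only [Finset.univ_eq_empty, Finset.sum_empty, sub_zero] at this
            simp only [norm_mul, Complex.norm_two]
            linarith
          have := ih (fun γ'' => 2 * f' γ'') h2 γ hγ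
          simp only [norm_mul, Complex.norm_two] at this
          rw [pow_succ]
          linarith
      have h0 : ‖f γ‖ ≤ 0 :=
        ge_of_tendsto' (tendsto_pow_atTop_nhds_zero_of_lt_one (by norm_num) (by norm_num))
          (fun n => key n f hf γ hγ)
      have hfz : f γ = 0 := by
        have := le_antisymm h0 (norm_nonneg _)
        exact norm_eq_zero.mp this
      simp [hfz]
  · -- N ≥ 1
    simp only [memAP] at h
    choose! gfun afun hα hap using h
    let F : ((G → ℂ) → ℂ) → ((G → ℂ) → ℂ) :=
      fun p γ => 2 * (p γ - ∑ j, afun p j * γ (gfun p j))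
    let seq : ℕ → ((G → ℂ) → ℂ) := fun m => F^[m] f
    have hseq_succ : ∀ m (γ : G → ℂ),
        seq (m+1) γ = 2 * (seq m γ - ∑ j, afun (seq m) j * γ (gfun (seq m) j)) := by
      intro m γ
      show (F^[m+1] f) γ = _
      rw [Function.iterate_succ_apply']
    have hbd : ∀ m, ∀ γ ∈ E, ‖seq m γ‖ ≤ 1 := by
      intro m
      induction m with
      | zero => exact hf
      | succ m ih =>
        intro γ hγ
        rw [hseq_succ, norm_mul, Complex.norm_two]
        have := hap (seq m) ih γ hγ
        linarith
    have hNR : (0:ℝ) < (N:ℝ) := by exact_mod_cast hN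
    let c : ℕ → ℂ := fun j => (1/2:ℂ)^(j/N) * afun (seq (j/N)) ⟨j % N, Nat.mod_lt _ hN⟩
    let gg : ℕ → G := fun j => gfun (seq (j/N)) ⟨j % N, Nat.mod_lt _ hN⟩
    -- the coefficient bound
    have hcb : ∀ j : ℕ, ‖c j‖ ≤ (1/2:ℝ)^(j/N) := by
      intro j
      show ‖(1/2:ℂ)^(j/N) * _‖ ≤ _
      rw [norm_mul, norm_pow]
      have h12 : ‖(1/2:ℂ)‖ = 1/2 := by
        rw [norm_div, norm_one, Complex.norm_two]
      rw [h12]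
      exact mul_le_of_le_one_right (by positivity) (hα (seq (j/N)) (hbd _) _)
    have hexp : ∀ j : ℕ, (1/2:ℝ)^(j/N) ≤ 2 * (2:ℝ) ^ (-((j:ℝ)+1)/(N:ℝ)) := by
      intro j
      have hdm := Nat.div_add_mod j N
      have hmlt := Nat.mod_lt j hN
      have hj1 : j + 1 ≤ N * (j/N) + N := by omega
      have hj2 : ((j:ℝ)+1)/(N:ℝ) ≤ ((j/N : ℕ):ℝ) + 1 := by
        rw [div_le_iff₀ hNR]
        have : ((j:ℝ)+1) ≤ (N:ℝ) * ((j/N : ℕ):ℝ) + (N:ℝ) := by exact_mod_cast hj1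
        nlinarith
      have hmono : (2:ℝ) ^ (-(((j/N : ℕ):ℝ) + 1)) ≤ (2:ℝ) ^ (-((j:ℝ)+1)/(N:ℝ)) := by
        apply Real.rpow_le_rpow_of_exponent_le (by norm_num)
        rw [neg_div]
        linarith
      have heq : (2:ℝ) ^ (-(((j/N : ℕ):ℝ) + 1)) = (1/2:ℝ)^(j/N) / 2 := by
        rw [show (-(((j/N : ℕ):ℝ) + 1)) = -(((j/N + 1 : ℕ)):ℝ) by push_cast; ring,
          Real.rpow_neg (by norm_num), Real.rpow_natCast, pow_succ, one_div, inv_pow,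
          mul_inv, div_eq_mul_inv]
      rw [heq] at hmono
      linarith
    refine ⟨c, gg, fun j => (hcb j).trans (hexp j), ?_⟩
    -- block sums
    have hblock : ∀ (m : ℕ) (γ : G → ℂ),
        ∑ i ∈ Finset.range N, c (m*N + i) * γ (gg (m*N + i)) =
          (1/2:ℂ)^m * ∑ j : Fin N, afun (seq m) j * γ (gfun (seq m) j) := by
      intro m γ
      rw [Finset.mul_sum, ← Fin.sum_univ_eq_sum_range (fun i => c (m*N+i) * γ (gg (m*N+i)))]
      refine Finset.sum_congr rfl fun i _ => ?_
      have hd : (m*N + (i:ℕ))/N = m := by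
        rw [Nat.add_comm, Nat.add_mul_div_right _ _ hN, Nat.div_eq_of_lt i.isLt, Nat.zero_add]
      have hm : (m*N + (i:ℕ)) % N = (i:ℕ) := by
        rw [Nat.add_comm, Nat.add_mul_mod_self_right, Nat.mod_eq_of_lt i.isLt]
      show (1/2:ℂ)^((m*N+(i:ℕ))/N) * afun (seq ((m*N+(i:ℕ))/N)) ⟨(m*N+(i:ℕ)) % N, _⟩ *
          γ (gfun (seq ((m*N+(i:ℕ))/N)) ⟨(m*N+(i:ℕ)) % N, _⟩) =
        (1/2:ℂ)^m * (afun (seq m) i * γ (gfun (seq m) i))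
      simp only [hd, hm, Fin.eta, mul_assoc]
    -- telescoping
    have key : ∀ (γ : G → ℂ) (m : ℕ),
        ∑ j ∈ Finset.range (m*N), c j * γ (gg j) = f γ - (1/2:ℂ)^m * seq m γ := by
      intro γ m
      induction m with
      | zero =>
        simp only [Nat.zero_mul, Finset.range_zero, Finset.sum_empty, pow_zero, one_mul]
        show (0:ℂ) = f γ - f γ
        ring
      | succ m ih =>
        rw [Nat.succ_mul, Finset.sum_range_add, ih, hblock, pow_succ]
        have hs := hseq_succ m γ
        linear_combination ((1/2:ℂ)^m/2) * hs
    intro γ hγ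
    have habs1 : ∀ g : G, ‖γ g‖ = 1 := (hE γ hγ).2.2
    -- summability
    set t : ℝ := (2:ℝ) ^ (-(1:ℝ)/(N:ℝ)) with ht
    have ht0 : 0 ≤ t := Real.rpow_nonneg (by norm_num) _
    have ht1 : t < 1 := by
      apply Real.rpow_lt_one_of_one_lt_of_neg (by norm_num)
      rw [neg_div]
      have : (0:ℝ) < 1/(N:ℝ) := by positivity
      linarith
    have hteq : ∀ j : ℕ, (2:ℝ) ^ (-((j:ℝ)+1)/(N:ℝ)) = t * t^j := by
      intro j
      rw [← pow_succ', ht, ← Real.rpow_natCast ((2:ℝ) ^ (-(1:ℝ)/(N:ℝ))) (j+1),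
        ← Real.rpow_mul (by norm_num : (0:ℝ) ≤ 2)]
      congr 1
      push_cast
      ring
    have hsummable : Summable (fun j => c j * γ (gg j)) := by
      apply Summable.of_norm_bounded (g := fun j => (2*t) * t^j)
        ((summable_geometric_of_lt_one ht0 ht1).mul_left (2*t))
      intro j
      rw [norm_mul, habs1, mul_one]
      calc ‖c j‖ ≤ 2 * (2:ℝ) ^ (-((j:ℝ)+1)/(N:ℝ)) := (hcb j).trans (hexp j)
        _ = (2*t) * t^j := by rw [hteq]; ring
    -- partial sums along blocks tend to the tsum
    have hmulN : Filter.Tendsto (fun m : ℕ => m * N) Filter.atTop Filter.atTop :=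
      Filter.tendsto_atTop_mono (fun m => Nat.le_mul_of_pos_right m hN) Filter.tendsto_id
    have h1 : Filter.Tendsto (fun m : ℕ => ∑ j ∈ Finset.range (m*N), c j * γ (gg j))
        Filter.atTop (nhds (∑' j, c j * γ (gg j))) :=
      (hsummable.hasSum.tendsto_sum_nat).comp hmulN
    have h2 : Filter.Tendsto (fun m : ℕ => f γ - (1/2:ℂ)^m * seq m γ)
        Filter.atTop (nhds (f γ)) := by
      have hz : Filter.Tendsto (fun m : ℕ => (1/2:ℂ)^m * seq m γ) Filter.atTop (nhds 0) := by
        have hhalf : Filter.Tendsto (fun m : ℕ => (1/2:ℝ)^m) Filter.atTop (nhds 0) :=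
          tendsto_pow_atTop_nhds_zero_of_lt_one (by norm_num) (by norm_num)
        refine squeeze_zero_norm (fun m => ?_) hhalf
        rw [norm_mul, norm_pow]
        have h12 : ‖(1/2:ℂ)‖ = (1/2:ℝ) := by
          rw [norm_div, norm_one, Complex.norm_two]
        rw [h12]
        exact mul_le_of_le_one_right (by positivity)
          (by exact hbd m γ hγ)
      have := Filter.Tendsto.sub (tendsto_const_nhds (x := f γ)) hz
      simpa using this
    have h1' : Filter.Tendsto (fun m : ℕ => f γ - (1/2:ℂ)^m * seq m γ)
        Filter.atTop (nhds (∑' j, c j * γ (gg j))) := by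
      have : (fun m : ℕ => ∑ j ∈ Finset.range (m*N), c j * γ (gg j)) =
          fun m : ℕ => f γ - (1/2:ℂ)^m * seq m γ := funext fun m => key γ m
      rwa [this] at h1
    exact tendsto_nhds_unique h2 h1'

end
end

section
/- Let F be a finite set of distinct continuous characters of G and let 0 < r < 1. For f : F → ℂ define ‖f‖_A as the infimum of (∑_{j=1}^∞ |c_j|^r)^{1/r} over all sequences (c_j)_{j=1}^∞ in ℂ with ∑_j |c_j|^r < ∞ and (g_j)_{j=1}^∞ in G such that f(γ) = ∑_{j=1}^∞ c_j γ(g_j) for all γ ∈ F. Then ‖f‖_A is finite for every f : F → ℂ, ‖·‖_A is an r-norm on the space of all functions F → ℂ, and it is submultiplicative for the pointwise product: ‖f₁f₂‖_A ≤ ‖f₁‖_A·‖f₂‖_A for all f₁, f₂ : F → ℂ. -/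
open MeasureTheory Complex
open scoped ENNReal NNReal

noncomputable section

/-- The quasinorm `‖f‖_A` on `ℓ∞(F)`: the infimum of `(∑ |c_j|^r)^{1/r}` over all
representations `f(γ) = ∑_j c_j γ(g_j)` for `γ ∈ F`. -/
def normA {G : Type} [CommGroup G] [TopologicalSpace G] (r : ℝ) (F : Finset (G → ℂ))
    (f : ↥F → ℂ) : ℝ :=
  sInf {t : ℝ | ∃ (c : ℕ → ℂ) (g : ℕ → G), Summable (fun j => ‖c j‖ ^ r) ∧
    (∀ γ : ↥F, f γ = ∑' j : ℕ, c j * (γ : G → ℂ) (g j)) ∧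
    t = (∑' j : ℕ, ‖c j‖ ^ r) ^ (1 / r)}

open Filter Topology
open scoped Pointwise

section auxreal

lemma myRpowAdd {r : ℝ} (hr0 : 0 < r) (hr1 : r ≤ 1) {x y : ℝ} (hx : 0 ≤ x) (hy : 0 ≤ y) :
    (x + y) ^ r ≤ x ^ r + y ^ r := by
  have h := NNReal.rpow_add_le_add_rpow x.toNNReal y.toNNReal hr0.le hr1
  have h2 := NNReal.coe_le_coe.2 h
  rw [NNReal.coe_rpow] at h2
  push_cast at h2
  rwa [Real.coe_toNNReal x hx, Real.coe_toNNReal y hy] at h2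

lemma mySumRpow {r : ℝ} (hr0 : 0 < r) (hr1 : r ≤ 1) {ι : Type*} (s : Finset ι) (a : ι → ℝ)
    (ha : ∀ i, 0 ≤ a i) : (∑ i ∈ s, a i) ^ r ≤ ∑ i ∈ s, a i ^ r := by
  induction s using Finset.cons_induction with
  | empty => simp [Real.zero_rpow hr0.ne']
  | cons i s hi ih =>
      simp only [Finset.sum_cons]
      refine (myRpowAdd hr0 hr1 (ha i) (Finset.sum_nonneg fun j _ => ha j)).trans ?_
      linarith

lemma myKey {r : ℝ} (hr0 : 0 < r) (hr1 : r ≤ 1) {a : ℕ → ℝ} (ha : ∀ j, 0 ≤ a j)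
    (h : Summable fun j => a j ^ r) :
    Summable a ∧ ∑' j, a j ≤ (∑' j, a j ^ r) ^ (1 / r) := by
  have hb : ∀ s : Finset ℕ, ∑ i ∈ s, a i ≤ (∑' j, a j ^ r) ^ (1 / r) := by
    intro s
    have h1 : (∑ i ∈ s, a i) ^ r ≤ ∑' j, a j ^ r :=
      (mySumRpow hr0 hr1 s a ha).trans
        (Summable.sum_le_tsum s (fun j _ => Real.rpow_nonneg (ha j) r) h)
    have hs0 : (0:ℝ) ≤ ∑ i ∈ s, a i := Finset.sum_nonneg fun j _ => ha j
    have h2 := Real.rpow_le_rpow (Real.rpow_nonneg hs0 r) h1 (by positivity : (0:ℝ) ≤ 1/r)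
    rwa [← Real.rpow_mul hs0, mul_one_div, div_self hr0.ne', Real.rpow_one] at h2
  have hsummable : Summable a := summable_of_sum_le ha hb
  exact ⟨hsummable, Summable.tsum_le_of_sum_le hsummable hb⟩

lemma myLimit {a b : ℝ} {φ : ℝ → ℝ} (hcont : Tendsto φ (𝓝[>] (0:ℝ)) (𝓝 b))
    (h : ∀ ε > (0:ℝ), a ≤ φ ε) : a ≤ b :=
  ge_of_tendsto hcont (eventually_nhdsWithin_of_forall fun ε hε => h ε hε)

lemma myTendstoRpow {x r : ℝ} (hr0 : 0 < r) :
    Tendsto (fun ε => (x + ε) ^ r) (𝓝[>] (0:ℝ)) (𝓝 (x ^ r)) := by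
  have h1 : Tendsto (fun ε : ℝ => x + ε) (𝓝 (0:ℝ)) (𝓝 x) := by
    simpa using (continuous_add_left x).tendsto (0:ℝ)
  exact ((Real.continuousAt_rpow_const x r (Or.inr hr0.le)).tendsto.comp h1).mono_left
    nhdsWithin_le_nhds

end auxreal

section charalg

lemma myCharOne {G : Type*} [CommGroup G] [TopologicalSpace G] {γ : G → ℂ} (h : IsChar γ) :
    γ 1 = 1 := by
  have h1 := h.2.1 1 1
  rw [one_mul] at h1
  have hne : γ 1 ≠ 0 := by
    intro h0; have := h.2.2 1; rw [h0] at this; simp at this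
  have : γ 1 * 1 = γ 1 * γ 1 := by rw [mul_one, ← h1]
  exact (mul_left_cancel₀ hne this).symm

/-- The monoid hom attached to a character. -/
def myChi {G : Type*} [CommGroup G] [TopologicalSpace G] (γ : G → ℂ) (h : IsChar γ) : G →* ℂ where
  toFun := γ
  map_one' := myCharOne h
  map_mul' := h.2.1

set_option maxHeartbeats 1000000 in
lemma myLI {G : Type} [CommGroup G] [TopologicalSpace G]
    (F : Finset (G → ℂ)) (hF : ∀ γ ∈ F, IsChar γ) :
    LinearIndependent ℂ (fun γ : ↥F => ((γ : G → ℂ))) := by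
  have h0 := linearIndependent_monoidHom G ℂ
  have hinj : Function.Injective (fun γ : ↥F => myChi (γ : G → ℂ) (hF γ.1 γ.2)) := by
    intro γ γ' h
    exact Subtype.ext (congrArg (fun m : G →* ℂ => (m : G → ℂ)) h)
  exact h0.comp _ hinj

lemma myExistsFinRepr {G : Type} [CommGroup G] [TopologicalSpace G]
    (F : Finset (G → ℂ)) (hF : ∀ γ ∈ F, IsChar γ) (f : ↥F → ℂ) :
    ∃ (n : ℕ) (α : Fin n → ℂ) (g : Fin n → G),
      ∀ γ : ↥F, f γ = ∑ j : Fin n, α j * (γ : G → ℂ) (g j) := by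
  classical
  set v : G → (↥F → ℂ) := fun g γ => (γ : G → ℂ) g with hv
  have hli := myLI F hF
  have hspan : Submodule.span ℂ (Set.range v) = ⊤ := by
    by_contra hne
    obtain ⟨φ, hφ0, hφ⟩ := Submodule.exists_dual_map_eq_bot_of_lt_top
      (lt_top_iff_ne_top.2 hne) inferInstance
    have hφv : ∀ g : G, φ (v g) = 0 := by
      intro g
      have hmem : v g ∈ Submodule.span ℂ (Set.range v) :=
        Submodule.subset_span (Set.mem_range_self g)
      have : φ (v g) ∈ Submodule.map φ (Submodule.span ℂ (Set.range v)) :=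
        Submodule.mem_map_of_mem hmem
      rw [hφ] at this
      simpa using this
    set a : ↥F → ℂ := fun γ => φ (Pi.single γ 1) with ha
    have hφx : ∀ x : ↥F → ℂ, φ x = ∑ γ : ↥F, x γ * a γ := by
      intro x
      conv_lhs => rw [← Finset.univ_sum_single x]
      rw [map_sum]
      refine Finset.sum_congr rfl fun γ _ => ?_
      have : Pi.single γ (x γ) = x γ • (Pi.single γ 1 : ↥F → ℂ) := by
        rw [← Pi.single_smul, smul_eq_mul, mul_one]
      rw [this, LinearMap.map_smul, smul_eq_mul, ha]
    have hcomb : ∑ γ : ↥F, a γ • ((γ : G → ℂ)) = 0 := by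
      funext g
      have hg := hφv g
      rw [hφx (v g)] at hg
      simpa [hv, mul_comm] using hg
    have hzero : ∀ γ : ↥F, a γ = 0 :=
      Fintype.linearIndependent_iff.1 hli a hcomb
    apply hφ0
    refine LinearMap.ext fun x => ?_
    rw [hφx x]
    simp [hzero]
  have hf : f ∈ Submodule.span ℂ (Set.range v) := by rw [hspan]; trivial
  rw [Finsupp.mem_span_range_iff_exists_finsupp] at hf
  obtain ⟨c, hc⟩ := hf
  set s := c.support with hs
  refine ⟨s.card, fun j => c (s.equivFin.symm j), fun j => (s.equivFin.symm j : G), fun γ => ?_⟩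
  have h1 : f γ = ∑ i ∈ s, c i * v i γ := by
    rw [← hc, Finsupp.sum, Finset.sum_apply]
    simp [smul_eq_mul, hs]
  rw [h1, ← Finset.sum_coe_sort s (fun i => c i * v i γ),
    ← Equiv.sum_comp s.equivFin.symm (fun i : ↥s => c ↑i * v (↑i) γ)]

end charalg
section SA

variable {G : Type} [CommGroup G] [TopologicalSpace G]

/-- The set of values of admissible representations. -/
def SA (r : ℝ) (F : Finset (G → ℂ)) (f : ↥F → ℂ) : Set ℝ :=
  {t : ℝ | ∃ (c : ℕ → ℂ) (g : ℕ → G), Summable (fun j => ‖c j‖ ^ r) ∧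
    (∀ γ : ↥F, f γ = ∑' j : ℕ, c j * (γ : G → ℂ) (g j)) ∧
    t = (∑' j : ℕ, ‖c j‖ ^ r) ^ (1 / r)}

lemma normA_def (r : ℝ) (F : Finset (G → ℂ)) (f : ↥F → ℂ) :
    normA r F f = sInf (SA r F f) := rfl

variable {r : ℝ} {F : Finset (G → ℂ)}

lemma myExistsSeqRepr (hr0 : 0 < r) (hF : ∀ γ ∈ F, IsChar γ) (f : ↥F → ℂ) :
    ∃ (c : ℕ → ℂ) (g : ℕ → G), Summable (fun j => ‖c j‖ ^ r) ∧
      ∀ γ : ↥F, f γ = ∑' j : ℕ, c j * (γ : G → ℂ) (g j) := by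
  obtain ⟨n, α, g0, h⟩ := myExistsFinRepr F hF f
  set c : ℕ → ℂ := fun j => if h : j < n then α ⟨j, h⟩ else 0 with hcdef
  set g : ℕ → G := fun j => if h : j < n then g0 ⟨j, h⟩ else 1 with hgdef
  have hczero : ∀ j ∉ Finset.range n, c j = 0 := by
    intro j hj
    rw [Finset.mem_range, not_lt] at hj
    simp [hcdef, dif_neg (not_lt.2 hj)]
  refine ⟨c, g, ?_, ?_⟩
  · refine summable_of_ne_finset_zero (s := Finset.range n) fun j hj => ?_
    rw [hczero j hj]
    simp [Real.zero_rpow hr0.ne']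
  · intro γ
    rw [tsum_eq_sum (s := Finset.range n) (fun j hj => by rw [hczero j hj, zero_mul]),
      ← Fin.sum_univ_eq_sum_range (fun j => c j * (γ : G → ℂ) (g j)) n, h γ]
    refine Finset.sum_congr rfl fun j _ => ?_
    have hj : (j : ℕ) < n := j.isLt
    simp [hcdef, hgdef, dif_pos hj]

lemma SA_nonempty (hr0 : 0 < r) (hF : ∀ γ ∈ F, IsChar γ) (f : ↥F → ℂ) :
    (SA r F f).Nonempty := by
  obtain ⟨c, g, hsum, hrep⟩ := myExistsSeqRepr hr0 hF f
  exact ⟨_, c, g, hsum, hrep, rfl⟩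

lemma SA_nonneg {f : ↥F → ℂ} {t : ℝ} (ht : t ∈ SA r F f) : 0 ≤ t := by
  obtain ⟨c, g, hsum, hrep, rfl⟩ := ht
  exact Real.rpow_nonneg (tsum_nonneg fun j => Real.rpow_nonneg (norm_nonneg _) r) _

lemma SA_bddBelow (f : ↥F → ℂ) : BddBelow (SA r F f) :=
  ⟨0, fun _ ht => SA_nonneg ht⟩

lemma SA_lb (hr0 : 0 < r) (hr1 : r ≤ 1) (hF : ∀ γ ∈ F, IsChar γ) {f : ↥F → ℂ} (γ : ↥F)
    {t : ℝ} (ht : t ∈ SA r F f) : ‖f γ‖ ≤ t := by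
  obtain ⟨c, g, hsum, hrep, rfl⟩ := ht
  have hkey := myKey hr0 hr1 (fun j => norm_nonneg (c j)) hsum
  have hchar := hF γ.1 γ.2
  have hnorm : (fun j => ‖c j * (γ : G → ℂ) (g j)‖) = fun j => ‖c j‖ := by
    funext j
    rw [norm_mul, hchar.2.2, mul_one]
  have h1 : ‖f γ‖ ≤ ∑' j, ‖c j‖ := by
    rw [hrep γ]
    calc ‖∑' j, c j * (γ : G → ℂ) (g j)‖
        ≤ ∑' j, ‖c j * (γ : G → ℂ) (g j)‖ :=
          norm_tsum_le_tsum_norm (by rw [hnorm]; exact hkey.1)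
      _ = ∑' j, ‖c j‖ := by rw [hnorm]
  exact h1.trans hkey.2

lemma SA_smul (hr0 : 0 < r) (c : ℂ) {f : ↥F → ℂ} {t : ℝ} (ht : t ∈ SA r F f) :
    ‖c‖ * t ∈ SA r F (c • f) := by
  obtain ⟨c₁, g₁, hsum, hrep, rfl⟩ := ht
  have habs : (fun j => ‖c * c₁ j‖ ^ r)
      = fun j => ‖c‖ ^ r * ‖c₁ j‖ ^ r := by
    funext j
    rw [norm_mul, Real.mul_rpow (norm_nonneg _) (norm_nonneg _)]
  refine ⟨fun j => c * c₁ j, g₁, ?_, ?_, ?_⟩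
  · rw [habs]; exact hsum.mul_left _
  · intro γ
    rw [Pi.smul_apply, smul_eq_mul, hrep γ, ← tsum_mul_left]
    exact tsum_congr fun j => (mul_assoc _ _ _).symm
  · rw [habs, tsum_mul_left,
      Real.mul_rpow (Real.rpow_nonneg (norm_nonneg _) _)
        (tsum_nonneg fun j => Real.rpow_nonneg (norm_nonneg _) r),
      ← Real.rpow_mul (norm_nonneg _), mul_one_div, div_self hr0.ne', Real.rpow_one]

lemma SA_add (hr0 : 0 < r) (hr1 : r ≤ 1) (hF : ∀ γ ∈ F, IsChar γ) {x y : ↥F → ℂ} {t₁ t₂ : ℝ}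
    (h₁ : t₁ ∈ SA r F x) (h₂ : t₂ ∈ SA r F y) :
    (t₁ ^ r + t₂ ^ r) ^ (1 / r) ∈ SA r F (x + y) := by
  obtain ⟨c₁, g₁, hsum₁, hrep₁, rfl⟩ := h₁
  obtain ⟨c₂, g₂, hsum₂, hrep₂, rfl⟩ := h₂
  set c : ℕ → ℂ := fun j => if j % 2 = 0 then c₁ (j / 2) else c₂ (j / 2) with hc
  set g : ℕ → G := fun j => if j % 2 = 0 then g₁ (j / 2) else g₂ (j / 2) with hg
  have hce : ∀ k, c (2 * k) = c₁ k := fun k => by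
    have h1 : (2 * k) % 2 = 0 := by omega
    have h2 : 2 * k / 2 = k := by omega
    simp [hc, h1, h2]
  have hco : ∀ k, c (2 * k + 1) = c₂ k := fun k => by
    have h1 : ¬((2 * k + 1) % 2 = 0) := by omega
    have h2 : (2 * k + 1) / 2 = k := by omega
    simp [hc, h1, h2]
  have hge : ∀ k, g (2 * k) = g₁ k := fun k => by
    have h1 : (2 * k) % 2 = 0 := by omega
    have h2 : 2 * k / 2 = k := by omega
    simp [hg, h1, h2]
  have hgo : ∀ k, g (2 * k + 1) = g₂ k := fun k => by
    have h1 : ¬((2 * k + 1) % 2 = 0) := by omega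
    have h2 : (2 * k + 1) / 2 = k := by omega
    simp [hg, h1, h2]
  have hsume : (fun k => ‖c (2 * k)‖ ^ r) = fun k => ‖c₁ k‖ ^ r :=
    funext fun k => by rw [hce k]
  have hsumo : (fun k => ‖c (2 * k + 1)‖ ^ r) = fun k => ‖c₂ k‖ ^ r :=
    funext fun k => by rw [hco k]
  have hsum : Summable fun j => ‖c j‖ ^ r :=
    Summable.even_add_odd (by rw [hsume]; exact hsum₁) (by rw [hsumo]; exact hsum₂)
  have hT : (∑' j, ‖c j‖ ^ r)
      = (∑' j, ‖c₁ j‖ ^ r) + (∑' j, ‖c₂ j‖ ^ r) := by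
    rw [← tsum_even_add_odd (by rw [hsume]; exact hsum₁) (by rw [hsumo]; exact hsum₂),
      hsume, hsumo]
  have hTnn : ∀ (d : ℕ → ℂ), 0 ≤ ∑' j, ‖d j‖ ^ r := fun d =>
    tsum_nonneg fun j => Real.rpow_nonneg (norm_nonneg _) r
  refine ⟨c, g, hsum, ?_, ?_⟩
  · intro γ
    have hchar := hF γ.1 γ.2
    have hsummand : ∀ (d : ℕ → ℂ) (gg : ℕ → G), Summable (fun j => ‖d j‖ ^ r) →
        Summable fun j => d j * (γ : G → ℂ) (gg j) := by
      intro d gg hd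
      have := (myKey hr0 hr1 (fun j => norm_nonneg (d j)) hd).1
      refine Summable.of_norm ?_
      have : (fun j => ‖d j * (γ : G → ℂ) (gg j)‖) = fun j => ‖d j‖ := by
        funext j; rw [norm_mul, hchar.2.2, mul_one]
      rw [this]
      exact (myKey hr0 hr1 (fun j => norm_nonneg (d j)) hd).1
    have he2 : (fun k => c (2 * k) * (γ : G → ℂ) (g (2 * k)))
        = fun k => c₁ k * (γ : G → ℂ) (g₁ k) := funext fun k => by rw [hce, hge]
    have ho2 : (fun k => c (2 * k + 1) * (γ : G → ℂ) (g (2 * k + 1)))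
        = fun k => c₂ k * (γ : G → ℂ) (g₂ k) := funext fun k => by rw [hco, hgo]
    rw [Pi.add_apply, hrep₁ γ, hrep₂ γ,
      ← tsum_even_add_odd (f := fun j => c j * (γ : G → ℂ) (g j))
        (by rw [he2]; exact hsummand c₁ g₁ hsum₁) (by rw [ho2]; exact hsummand c₂ g₂ hsum₂),
      he2, ho2]
  · have e1 : ((∑' j, ‖c₁ j‖ ^ r) ^ (1 / r)) ^ r = ∑' j, ‖c₁ j‖ ^ r := by
      rw [← Real.rpow_mul (hTnn c₁), one_div, inv_mul_cancel₀ hr0.ne', Real.rpow_one]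
    have e2 : ((∑' j, ‖c₂ j‖ ^ r) ^ (1 / r)) ^ r = ∑' j, ‖c₂ j‖ ^ r := by
      rw [← Real.rpow_mul (hTnn c₂), one_div, inv_mul_cancel₀ hr0.ne', Real.rpow_one]
    rw [hT, e1, e2]

lemma SA_mul (hr0 : 0 < r) (hr1 : r ≤ 1) (hF : ∀ γ ∈ F, IsChar γ) {f₁ f₂ : ↥F → ℂ} {t₁ t₂ : ℝ}
    (h₁ : t₁ ∈ SA r F f₁) (h₂ : t₂ ∈ SA r F f₂) : t₁ * t₂ ∈ SA r F (f₁ * f₂) := by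
  obtain ⟨c₁, g₁, hsum₁, hrep₁, rfl⟩ := h₁
  obtain ⟨c₂, g₂, hsum₂, hrep₂, rfl⟩ := h₂
  set e : ℕ ≃ ℕ × ℕ := (Denumerable.eqv (ℕ × ℕ)).symm with hedef
  set c : ℕ → ℂ := fun j => c₁ (e j).1 * c₂ (e j).2 with hc
  set g : ℕ → G := fun j => g₁ (e j).1 * g₂ (e j).2 with hg
  have habsnn : ∀ (d : ℕ → ℂ) (j : ℕ), (0:ℝ) ≤ ‖d j‖ ^ r := fun d j =>
    Real.rpow_nonneg (norm_nonneg _) r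
  have hprodsum : Summable fun p : ℕ × ℕ =>
      ‖c₁ p.1‖ ^ r * ‖c₂ p.2‖ ^ r :=
    hsum₁.mul_of_nonneg hsum₂ (fun j => habsnn c₁ j) (fun j => habsnn c₂ j)
  have habs : (fun j => ‖c j‖ ^ r)
      = (fun p : ℕ × ℕ => ‖c₁ p.1‖ ^ r * ‖c₂ p.2‖ ^ r) ∘ e := by
    funext j
    simp only [hc, Function.comp_apply]
    rw [norm_mul, Real.mul_rpow (norm_nonneg _) (norm_nonneg _)]
  have hsum : Summable fun j => ‖c j‖ ^ r := by
    rw [habs]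
    exact (e.summable_iff).2 hprodsum
  have hnormsum : ∀ (d : ℕ → ℂ), Summable (fun j => ‖d j‖ ^ r) →
      Summable fun j => ‖‖d j‖ ^ r‖ := by
    intro d hd
    have : (fun j => ‖‖d j‖ ^ r‖) = fun j => ‖d j‖ ^ r := by
      funext j; rw [Real.norm_of_nonneg (habsnn d j)]
    rw [this]; exact hd
  have hT : (∑' j, ‖c j‖ ^ r)
      = (∑' j, ‖c₁ j‖ ^ r) * (∑' j, ‖c₂ j‖ ^ r) := by
    rw [habs]
    exact (e.tsum_eq _).trans
      (tsum_mul_tsum_of_summable_norm (hnormsum c₁ hsum₁) (hnormsum c₂ hsum₂)).symm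
  refine ⟨c, g, hsum, ?_, ?_⟩
  · intro γ
    have hchar := hF γ.1 γ.2
    have hnorm : ∀ (d : ℕ → ℂ) (gg : ℕ → G),
        Summable (fun j => ‖d j‖ ^ r) →
        Summable fun j => ‖d j * (γ : G → ℂ) (gg j)‖ := by
      intro d gg hd
      have : (fun j => ‖d j * (γ : G → ℂ) (gg j)‖) = fun j => ‖d j‖ := by
        funext j; rw [norm_mul, hchar.2.2, mul_one]
      rw [this]
      exact (myKey hr0 hr1 (fun j => norm_nonneg (d j)) hd).1
    have hmul := tsum_mul_tsum_of_summable_norm (hnorm c₁ g₁ hsum₁) (hnorm c₂ g₂ hsum₂)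
    rw [Pi.mul_apply, hrep₁ γ, hrep₂ γ, hmul, ← e.tsum_eq]
    refine tsum_congr fun j => ?_
    simp only [hc, hg, Function.comp_apply]
    rw [hchar.2.1]
    ring
  · rw [hT, Real.mul_rpow (tsum_nonneg (habsnn c₁)) (tsum_nonneg (habsnn c₂))]

end SA
/-- For a finite set `F` of (distinct) continuous characters of `G` and
`0 < r < 1`: every `f : F → ℂ` admits a representation (so `‖f‖_A < ∞`), `‖⬝‖_A` is an
`r`-norm on `ℓ∞(F)`, and it is submultiplicative for the pointwise product. -/
theorem statement6 {G : Type} [CommGroup G] [TopologicalSpace G] [IsTopologicalGroup G]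
    [CompactSpace G] (r : ℝ) (hr0 : 0 < r) (hr1 : r < 1)
    (F : Finset (G → ℂ)) (hF : ∀ γ ∈ F, IsChar γ) :
    (∀ f : ↥F → ℂ, ∃ (c : ℕ → ℂ) (g : ℕ → G), Summable (fun j => ‖c j‖ ^ r) ∧
        ∀ γ : ↥F, f γ = ∑' j : ℕ, c j * (γ : G → ℂ) (g j)) ∧
    IsRNorm r (normA r F) ∧
    (∀ f₁ f₂ : ↥F → ℂ, normA r F (f₁ * f₂) ≤ normA r F f₁ * normA r F f₂) := by
  have hr1' : r ≤ 1 := hr1.le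
  have hnonneg : ∀ f : ↥F → ℂ, 0 ≤ normA r F f := fun f => by
    rw [normA_def]
    exact le_csInf (SA_nonempty hr0 hF f) fun t ht => SA_nonneg ht
  have happrox : ∀ (f : ↥F → ℂ) (ε : ℝ), 0 < ε → ∃ t ∈ SA r F f, t < normA r F f + ε := by
    intro f ε hε
    refine exists_lt_of_csInf_lt (SA_nonempty hr0 hF f) ?_
    rw [normA_def] at *
    linarith
  have hle_of_mem : ∀ (f : ↥F → ℂ) {t : ℝ}, t ∈ SA r F f → normA r F f ≤ t := by
    intro f t ht
    rw [normA_def]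
    exact csInf_le (SA_bddBelow f) ht
  refine ⟨fun f => myExistsSeqRepr hr0 hF f, ⟨hnonneg, ?_, ?_, ?_⟩, ?_⟩
  · -- positivity
    intro f hf
    obtain ⟨γ, hγ⟩ := Function.ne_iff.1 hf
    have h1 : 0 < ‖f γ‖ := by
      simpa [norm_pos_iff] using hγ
    refine lt_of_lt_of_le h1 ?_
    rw [normA_def]
    exact le_csInf (SA_nonempty hr0 hF f) fun t ht => SA_lb hr0 hr1' hF γ ht
  · -- homogeneity
    intro c f
    rcases eq_or_ne c 0 with rfl | hc
    · have h0 : (0 : ℂ) • f = 0 := zero_smul _ _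
      rw [h0, norm_zero, zero_mul]
      have hmem : (0:ℝ) ∈ SA r F (0 : ↥F → ℂ) := by
        refine ⟨fun _ => 0, fun _ => 1, ?_, ?_, ?_⟩
        · simpa [Real.zero_rpow hr0.ne'] using summable_zero
        · intro γ; simp
        · simp [one_div, Real.zero_rpow hr0.ne', Real.zero_rpow (inv_ne_zero hr0.ne')]
      refine le_antisymm (hle_of_mem _ hmem) (hnonneg 0)
    · have hset : SA r F (c • f) = ‖c‖ • SA r F f := by
        ext u
        constructor
        · intro hu
          have h2 := SA_smul hr0 c⁻¹ hu
          rw [smul_smul, inv_mul_cancel₀ hc, one_smul] at h2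
          refine ⟨‖c⁻¹‖ * u, h2, ?_⟩
          show ‖c‖ • (‖c⁻¹‖ * u) = u
          rw [smul_eq_mul, norm_inv, ← mul_assoc,
            mul_inv_cancel₀ (norm_ne_zero_iff.2 hc), one_mul]
        · rintro ⟨t, ht, rfl⟩
          exact SA_smul hr0 c ht
      rw [normA_def, normA_def, hset, Real.sInf_smul_of_nonneg (norm_nonneg c),
        smul_eq_mul]
  · -- triangle inequality
    intro x y
    have hstep : ∀ ε > (0:ℝ), normA r F (x + y) ^ r
        ≤ (normA r F x + ε) ^ r + (normA r F y + ε) ^ r := by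
      intro ε hε
      obtain ⟨t₁, ht₁, ht₁'⟩ := happrox x ε hε
      obtain ⟨t₂, ht₂, ht₂'⟩ := happrox y ε hε
      have hmem := SA_add hr0 hr1' hF ht₁ ht₂
      have h1 : normA r F (x + y) ≤ (t₁ ^ r + t₂ ^ r) ^ (1 / r) := hle_of_mem _ hmem
      have h4 : t₁ ^ r ≤ (normA r F x + ε) ^ r :=
        Real.rpow_le_rpow (SA_nonneg ht₁) ht₁'.le hr0.le
      have h5 : t₂ ^ r ≤ (normA r F y + ε) ^ r :=
        Real.rpow_le_rpow (SA_nonneg ht₂) ht₂'.le hr0.le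
      have hBnn : (0:ℝ) ≤ (normA r F x + ε) ^ r + (normA r F y + ε) ^ r := by
        have := Real.rpow_nonneg (by linarith [hnonneg x] : (0:ℝ) ≤ normA r F x + ε) r
        have := Real.rpow_nonneg (by linarith [hnonneg y] : (0:ℝ) ≤ normA r F y + ε) r
        linarith
      have h2 : normA r F (x + y)
          ≤ ((normA r F x + ε) ^ r + (normA r F y + ε) ^ r) ^ (1 / r) := by
        refine h1.trans ?_
        refine Real.rpow_le_rpow ?_ (by linarith) (by positivity)
        have := Real.rpow_nonneg (SA_nonneg ht₁) r
        have := Real.rpow_nonneg (SA_nonneg ht₂) r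
        linarith
      have h3 := Real.rpow_le_rpow (hnonneg (x + y)) h2 hr0.le
      rwa [← Real.rpow_mul hBnn, one_div, inv_mul_cancel₀ hr0.ne', Real.rpow_one] at h3
    exact myLimit ((myTendstoRpow hr0).add (myTendstoRpow hr0)) hstep
  · -- submultiplicativity
    intro f₁ f₂
    have hstep : ∀ ε > (0:ℝ), normA r F (f₁ * f₂)
        ≤ (normA r F f₁ + ε) * (normA r F f₂ + ε) := by
      intro ε hε
      obtain ⟨t₁, ht₁, ht₁'⟩ := happrox f₁ ε hε
      obtain ⟨t₂, ht₂, ht₂'⟩ := happrox f₂ ε hε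
      have hmem := SA_mul hr0 hr1' hF ht₁ ht₂
      refine (hle_of_mem _ hmem).trans ?_
      have h1 : (0:ℝ) ≤ normA r F f₁ + ε := by linarith [hnonneg f₁]
      exact mul_le_mul ht₁'.le ht₂'.le (SA_nonneg ht₂) h1
    have hcont : Filter.Tendsto (fun ε => (normA r F f₁ + ε) * (normA r F f₂ + ε))
        (nhdsWithin 0 (Set.Ioi 0)) (nhds (normA r F f₁ * normA r F f₂)) := by
      have h1 : Filter.Tendsto (fun ε : ℝ => normA r F f₁ + ε) (nhds (0:ℝ))
          (nhds (normA r F f₁)) := by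
        simpa using (continuous_add_left (normA r F f₁)).tendsto (0:ℝ)
      have h2 : Filter.Tendsto (fun ε : ℝ => normA r F f₂ + ε) (nhds (0:ℝ))
          (nhds (normA r F f₂)) := by
        simpa using (continuous_add_left (normA r F f₂)).tendsto (0:ℝ)
      exact (h1.mul h2).mono_left nhdsWithin_le_nhds
    exact myLimit hcont hstep

end
end

section
/- Let (λ_k)_{k≥1} be a strictly increasing sequence of positive integers and let m ≥ 1. Then the set {λ_k : k ≥ 1} can be partitioned into m subsets, each of which, arranged in increasing order, is a Hadamard gap sequence, if and only if there exists q > 1 such that λ_{k+m} ≥ q^m λ_k for every k ≥ 1. -/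
open MeasureTheory Complex
open scoped ENNReal NNReal

noncomputable section

/-- A set `S ⊆ ℕ` of positive integers which, arranged in increasing order, is a Hadamard
gap sequence: for some `q > 1`, any two consecutive elements of `S` have ratio `≥ q`.
(Finite sets are admitted.) -/
def IsHadamardSet (S : Set ℕ) : Prop :=
  (∀ n ∈ S, 0 < n) ∧ ∃ q : ℝ, 1 < q ∧
    ∀ a ∈ S, ∀ b ∈ S, a < b → (∀ c ∈ S, c ≤ a ∨ b ≤ c) → q * (a : ℝ) ≤ (b : ℝ)

/-- Let `(λ_k)` be a strictly increasing sequence of positive integers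
and `m ≥ 1`. Then `{λ_k : k}` can be partitioned into `m` sets which are Hadamard gap
sequences if and only if there is `q > 1` with `λ_{k+m} ≥ q^m λ_k` for all `k`. -/
theorem statement10 (lam : ℕ → ℕ) (hmono : StrictMono lam) (hpos : ∀ k, 0 < lam k)
    (m : ℕ) (hm : 1 ≤ m) :
    (∃ A : Fin m → Set ℕ, (∀ i j, i ≠ j → Disjoint (A i) (A j)) ∧
        (⋃ i, A i) = Set.range lam ∧ ∀ i, IsHadamardSet (A i)) ↔
    (∃ q : ℝ, 1 < q ∧ ∀ k : ℕ, q ^ m * (lam k : ℝ) ≤ (lam (k + m) : ℝ)) := by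
  classical
  have hmR : (0:ℝ) < m := by exact_mod_cast hm
  constructor
  · rintro ⟨A, hdisj, hunion, hHad⟩
    haveI : Nonempty (Fin m) := ⟨⟨0, hm⟩⟩
    set qf : Fin m → ℝ := fun i => (hHad i).2.choose with hqf
    have hqf1 : ∀ i, 1 < qf i := fun i => (hHad i).2.choose_spec.1
    have hqfc : ∀ i, ∀ a ∈ A i, ∀ b ∈ A i, a < b → (∀ c ∈ A i, c ≤ a ∨ b ≤ c) →
        qf i * (a:ℝ) ≤ (b:ℝ) := fun i => (hHad i).2.choose_spec.2
    set Q : ℝ := Finset.univ.inf' Finset.univ_nonempty qf with hQdef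
    have hQ1 : 1 < Q := by
      rw [hQdef, Finset.lt_inf'_iff]
      intro i _; exact hqf1 i
    have key : ∀ k, Q * (lam k : ℝ) ≤ (lam (k + m) : ℝ) := by
      intro k
      have hmem : ∀ s : Fin (m+1), ∃ i, lam (k + s.val) ∈ A i := by
        intro s
        have : lam (k + s.val) ∈ ⋃ i, A i := by
          rw [hunion]; exact ⟨k + s.val, rfl⟩
        exact Set.mem_iUnion.mp this
      choose f hf using hmem
      obtain ⟨s, t, hlt, hi⟩ : ∃ s t : Fin (m+1), s < t ∧ f s = f t := by
        obtain ⟨s, t, hst, hfeq⟩ := Fintype.exists_ne_map_eq_of_card_lt f (by simp)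
        rcases lt_or_gt_of_ne hst with h | h
        · exact ⟨s, t, h, hfeq⟩
        · exact ⟨t, s, h, hfeq.symm⟩
      set i := f s with hidef
      have ha : lam (k + s.val) ∈ A i := hf s
      have hb : lam (k + t.val) ∈ A i := by rw [hi]; exact hf t
      have hab : lam (k + s.val) < lam (k + t.val) := hmono (by omega)
      have hex : ∃ n, n ∈ A i ∧ lam (k + s.val) < n := ⟨_, hb, hab⟩
      obtain ⟨hbA, hbgt⟩ := Nat.find_spec hex
      have hble : Nat.find hex ≤ lam (k + t.val) := Nat.find_min' hex ⟨hb, hab⟩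
      have hcons : ∀ c ∈ A i, c ≤ lam (k + s.val) ∨ Nat.find hex ≤ c := by
        intro c hc
        by_cases h : lam (k + s.val) < c
        · exact Or.inr (Nat.find_min' hex ⟨hc, h⟩)
        · exact Or.inl (by omega)
      have h1 : qf i * (lam (k + s.val) : ℝ) ≤ (Nat.find hex : ℝ) :=
        hqfc i _ ha _ hbA hbgt hcons
      have hQi : Q ≤ qf i := Finset.inf'_le _ (Finset.mem_univ i)
      have h2 : Q * (lam k : ℝ) ≤ qf i * (lam (k + s.val) : ℝ) := by
        apply mul_le_mul hQi (by exact_mod_cast hmono.monotone (by omega))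
          (by positivity) (by linarith [hqf1 i])
      have h3 : (lam (k + t.val) : ℝ) ≤ (lam (k + m) : ℝ) := by
        exact_mod_cast hmono.monotone (by omega)
      calc Q * (lam k : ℝ) ≤ qf i * (lam (k + s.val) : ℝ) := h2
        _ ≤ (Nat.find hex : ℝ) := h1
        _ ≤ (lam (k + t.val) : ℝ) := by exact_mod_cast hble
        _ ≤ _ := h3
    have hmR0 : (m:ℝ) ≠ 0 := ne_of_gt hmR
    refine ⟨Q ^ ((1:ℝ)/m), ?_, ?_⟩
    · exact (Real.one_lt_rpow_iff_of_pos (by linarith)).mpr (Or.inl ⟨hQ1, by positivity⟩)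
    · intro k
      have hQpow : (Q ^ ((1:ℝ)/m)) ^ m = Q := by
        rw [← Real.rpow_natCast (Q ^ ((1:ℝ)/m)) m, ← Real.rpow_mul (by linarith)]
        have : (1:ℝ)/m * m = 1 := by field_simp
        rw [this, Real.rpow_one]
      rw [hQpow]
      exact key k
  · rintro ⟨q, hq1, hqk⟩
    refine ⟨fun i => {n | ∃ k, k % m = i.val ∧ lam k = n}, ?_, ?_, ?_⟩
    · intro i j hij
      rw [Set.disjoint_left]
      rintro n ⟨k, hk, hkn⟩ ⟨k', hk', hkn'⟩
      have hkk : k = k' := hmono.injective (hkn.trans hkn'.symm)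
      exact hij (Fin.ext (by rw [← hk, hkk, hk']))
    · ext n
      simp only [Set.mem_iUnion, Set.mem_setOf_eq, Set.mem_range]
      constructor
      · rintro ⟨i, k, _, hk⟩; exact ⟨k, hk⟩
      · rintro ⟨k, hk⟩
        exact ⟨⟨k % m, Nat.mod_lt _ (by omega)⟩, k, rfl, hk⟩
    · intro i
      constructor
      · rintro n ⟨k, _, rfl⟩; exact hpos k
      · refine ⟨q ^ m, one_lt_pow₀ hq1 (by omega), ?_⟩
        rintro a ⟨k, hk, rfl⟩ b ⟨k', hk', rfl⟩ hab _
        have hkk' : k < k' := hmono.lt_iff_lt.mp (by exact_mod_cast hab)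
        have hdvd : m ∣ k' - k :=
          (Nat.modEq_iff_dvd' hkk'.le).mp (hk.trans hk'.symm)
        obtain ⟨d, hd⟩ := hdvd
        have hd0 : 0 < d := by
          rcases Nat.eq_zero_or_pos d with h | h
          · subst h; simp at hd; omega
          · exact h
        have hmd : m ≤ m * d := Nat.le_mul_of_pos_right m hd0
        have hkm : k + m ≤ k' := by omega
        have hle : (lam (k + m) : ℝ) ≤ (lam k' : ℝ) := by
          exact_mod_cast hmono.monotone hkm
        calc q ^ m * (lam k : ℝ) ≤ (lam (k + m) : ℝ) := hqk k
          _ ≤ _ := hle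

end
end

section
/- The set E = {3^n : n ≥ 1} ∪ {3^n + n : n ≥ 1} ⊆ ℤ, which is a union of two Hadamard gap sequences, is not a set of interpolation: there exist a bounded function f : E → ℂ and ε > 0 such that for every N ∈ ℕ, all c_1,…,c_N ∈ ℂ and all ζ_1,…,ζ_N ∈ 𝕋, sup_{n∈E}|f(n) − ∑_{j=1}^N c_j ζ_j^n| > ε. -/
open MeasureTheory Complex
open scoped ENNReal NNReal

noncomputable section

/-- The set `E = {3^n : n ≥ 1} ∪ {3^n + n : n ≥ 1}`, a union of two Hadamard gap
sequences. -/
def E12 : Set ℕ :=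
  {a : ℕ | ∃ n : ℕ, 1 ≤ n ∧ a = 3 ^ n} ∪ {a : ℕ | ∃ n : ℕ, 1 ≤ n ∧ a = 3 ^ n + n}

lemma aux_disj (n m : ℕ) (hn : 1 ≤ n) (hm : 1 ≤ m) : 3 ^ n + n ≠ 3 ^ m := by
  intro h
  have h1 : n < 3 ^ n := Nat.lt_pow_self (by norm_num)
  have hnm : n < m := by
    by_contra hc
    push_neg at hc
    have := Nat.pow_le_pow_right (by norm_num : 1 ≤ 3) hc
    omega
  have : 3 ^ (n + 1) ≤ 3 ^ m := Nat.pow_le_pow_right (by norm_num) hnm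
  have : 3 ^ (n + 1) = 3 * 3 ^ n := by ring
  omega

/-- Simultaneous Diophantine approximation: for unimodular `ζ j` there is `n ≥ 1`
with all `ζ j ^ n` close to `1`. -/
lemma aux_simul (N : ℕ) (ζ : Fin N → ℂ) (hζ : ∀ j, ‖ζ j‖ = 1)
    (δ : ℝ) (hδ : 0 < δ) : ∃ n : ℕ, 1 ≤ n ∧ ∀ j, ‖ζ j ^ n - 1‖ < δ := by
  set u : ℕ → (Fin N → ℂ) := fun n j => ζ j ^ n with hu
  have hb : ∀ n, u n ∈ Metric.closedBall (0 : Fin N → ℂ) 1 := by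
    intro n
    simp only [Metric.mem_closedBall, dist_zero_right]
    refine (pi_norm_le_iff_of_nonneg zero_le_one).2 fun j => ?_
    rw [norm_pow, hζ j, one_pow]
  obtain ⟨a, _, φ, hφ, hconv⟩ := tendsto_subseq_of_bounded
    (Metric.isBounded_closedBall (x := (0 : Fin N → ℂ)) (r := 1)) hb
  have hcauchy : CauchySeq (u ∘ φ) := hconv.cauchySeq
  rw [Metric.cauchySeq_iff] at hcauchy
  obtain ⟨M, hM⟩ := hcauchy δ hδ
  have hlt : φ M < φ (M + 1) := hφ (Nat.lt_succ_self M)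
  refine ⟨φ (M + 1) - φ M, by omega, fun j => ?_⟩
  have hd := hM (M + 1) (by omega) M (le_refl M)
  have hdj : dist (u (φ (M + 1)) j) (u (φ M) j) ≤ dist (u (φ (M + 1))) (u (φ M)) :=
    dist_le_pi_dist _ _ j
  have key : ζ j ^ φ (M + 1) - ζ j ^ φ M = ζ j ^ φ M * (ζ j ^ (φ (M + 1) - φ M) - 1) := by
    rw [mul_sub, mul_one, ← pow_add, Nat.add_sub_cancel' hlt.le]
  have : ‖ζ j ^ φ (M + 1) - ζ j ^ φ M‖
      = ‖ζ j ^ (φ (M + 1) - φ M) - 1‖ := by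
    rw [key, norm_mul, norm_pow, hζ j, one_pow, one_mul]
  calc ‖ζ j ^ (φ (M + 1) - φ M) - 1‖
      = ‖ζ j ^ φ (M + 1) - ζ j ^ φ M‖ := this.symm
    _ = dist (u (φ (M + 1)) j) (u (φ M) j) := by
        rw [Complex.dist_eq]
    _ ≤ dist (u (φ (M + 1))) (u (φ M)) := hdj
    _ < δ := by simpa using hd

/-- The set `E = {3^n} ∪ {3^n + n}` is not a set of interpolation:
some bounded function on `E` cannot be approximated within some `ε > 0`, uniformly on
`E`, by trigonometric polynomials `n ↦ ∑_j c_j ζ_j^n` with `ζ_j ∈ 𝕋`. -/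
theorem statement12 :
    ∃ f : ℕ → ℂ, (∃ B : ℝ, ∀ n ∈ E12, ‖f n‖ ≤ B) ∧
      ∃ ε : ℝ, 0 < ε ∧
        ∀ (N : ℕ) (c : Fin N → ℂ) (ζ : Fin N → ℂ), (∀ j, ‖ζ j‖ = 1) →
          ∃ n ∈ E12, ε < ‖f n - ∑ j, c j * ζ j ^ n‖ := by
  classical
  refine ⟨fun a => if ∃ m : ℕ, 1 ≤ m ∧ a = 3 ^ m then 1 else 0, ⟨1, fun n _ => ?_⟩,
    1/4, by norm_num, ?_⟩
  · dsimp only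
    split <;> simp
  intro N c ζ hζ
  by_contra hcon
  push_neg at hcon
  set p : ℕ → ℂ := fun n => ∑ j, c j * ζ j ^ n with hp
  set S : ℝ := ∑ j, ‖c j‖ with hS
  have hS0 : 0 ≤ S := Finset.sum_nonneg fun j _ => (norm_nonneg _)
  have hδ : 0 < 1 / (2 * (S + 1)) := by positivity
  obtain ⟨n, hn1, hnζ⟩ := aux_simul N ζ hζ _ hδ
  have ha1 : (3 ^ n : ℕ) ∈ E12 := Or.inl ⟨n, hn1, rfl⟩
  have ha2 : (3 ^ n + n : ℕ) ∈ E12 := Or.inr ⟨n, hn1, rfl⟩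
  have h1 : ‖1 - p (3 ^ n)‖ ≤ 1/4 := by
    have := hcon (3 ^ n) ha1
    rw [if_pos ⟨n, hn1, rfl⟩] at this
    exact this
  have h2 : ‖p (3 ^ n + n)‖ ≤ 1/4 := by
    have := hcon (3 ^ n + n) ha2
    rw [if_neg (by rintro ⟨m, hm, he⟩; exact aux_disj n m hn1 hm he),
      zero_sub, norm_neg] at this
    exact this
  -- the difference is small
  have hdiff : p (3 ^ n + n) - p (3 ^ n) = ∑ j, c j * ζ j ^ (3 ^ n) * (ζ j ^ n - 1) := by
    rw [hp, ← Finset.sum_sub_distrib]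
    refine Finset.sum_congr rfl fun j _ => ?_
    rw [pow_add]
    ring
  have hsmall : ‖p (3 ^ n + n) - p (3 ^ n)‖ < 1/2 := by
    rw [hdiff]
    calc ‖∑ j, c j * ζ j ^ (3 ^ n) * (ζ j ^ n - 1)‖
        ≤ ∑ j, ‖c j * ζ j ^ (3 ^ n) * (ζ j ^ n - 1)‖ :=
          norm_sum_le _ _
      _ ≤ ∑ j, ‖c j‖ * (1 / (2 * (S + 1))) := by
          refine Finset.sum_le_sum fun j _ => ?_
          rw [norm_mul, norm_mul, norm_pow, hζ j, one_pow, mul_one]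
          exact mul_le_mul_of_nonneg_left (le_of_lt (hnζ j)) (norm_nonneg _)
      _ = S * (1 / (2 * (S + 1))) := by rw [← Finset.sum_mul]
      _ < 1/2 := by
          rw [mul_one_div, div_lt_iff₀ (by positivity)]
          nlinarith
  have hbig : (1 : ℝ) ≤ ‖1 - p (3 ^ n)‖
      + ‖p (3 ^ n + n) - p (3 ^ n)‖ + ‖p (3 ^ n + n)‖ := by
    have := norm_add_le (1 - p (3 ^ n)) (p (3 ^ n) - p (3 ^ n + n))
    have h3 := norm_add_le (1 - p (3 ^ n + n)) (p (3 ^ n + n))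
    simp only [sub_add_cancel, norm_one] at h3
    have h4 : ‖1 - p (3 ^ n + n)‖
        ≤ ‖1 - p (3 ^ n)‖ + ‖p (3 ^ n) - p (3 ^ n + n)‖ := by
      calc ‖1 - p (3 ^ n + n)‖
          = ‖(1 - p (3 ^ n)) + (p (3 ^ n) - p (3 ^ n + n))‖ := by ring_nf
        _ ≤ _ := norm_add_le _ _
    have h5 : ‖p (3 ^ n) - p (3 ^ n + n)‖
        = ‖p (3 ^ n + n) - p (3 ^ n)‖ := by
      rw [← norm_neg]; ring_nf
    linarith
  linarith

end
end

section
/- For every 0 < r ≤ 1 and 0 < p ≤ ∞ there is a constant C = C(r,p) such that for every complex vector space X with r-norm ν, all x_1,…,x_n ∈ X and all a_1,…,a_n ∈ ℂ with |a_k| ≤ 1 for each k: (∫_Δ ν(∑_{k=1}^n a_k ε_k(t) x_k)^p dμ_Δ(t))^{1/p} ≤ C(∫_Δ ν(∑_{k=1}^n ε_k(t)x_k)^p dμ_Δ(t))^{1/p}; for p = ∞ the integral means are replaced by suprema over Δ. -/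
open MeasureTheory Complex
open scoped ENNReal NNReal

noncomputable section

def rsgn (b : Bool) : ℝ := if b then 1 else -1

lemma abs_sgn (b : Bool) : ‖sgn b‖ = 1 := by cases b <;> simp [sgn]

lemma sgn_mul_sgn (b c : Bool) : sgn b * sgn c = sgn (b == c) := by
  cases b <;> cases c <;> simp [sgn]

lemma sgn_eq_rsgn (b : Bool) : sgn b = ((rsgn b : ℝ) : ℂ) := by cases b <;> simp [sgn, rsgn]

variable {X : Type} [AddCommGroup X] [Module ℂ X] {r : ℝ} {ν : X → ℝ}

lemma IsRNorm.zero' (h : IsRNorm r ν) : ν 0 = 0 := by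
  have := h.2.2.1 0 0
  simpa using this

lemma IsRNorm.sum_rpow_le (h : IsRNorm r ν) (hr : 0 < r) {ι : Type*} (s : Finset ι)
    (f : ι → X) : ν (∑ i ∈ s, f i) ^ r ≤ ∑ i ∈ s, ν (f i) ^ r := by
  classical
  induction s using Finset.cons_induction with
  | empty => simp [h.zero', Real.zero_rpow hr.ne']
  | cons a s ha ih =>
      rw [Finset.sum_cons, Finset.sum_cons]
      exact (h.2.2.2 _ _).trans (by linarith)

lemma digit_expand (m : ℕ) : ∀ u : ℝ, |u| ≤ 1 → ∃ s : Fin m → Bool,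
    |u - ∑ j : Fin m, rsgn (s j) * (2⁻¹ : ℝ) ^ (j.val + 1)| ≤ (2⁻¹ : ℝ) ^ m := by
  induction m with
  | zero => intro u hu; exact ⟨Fin.elim0, by simpa using hu⟩
  | succ m ih =>
      intro u hu
      set b : Bool := decide (0 ≤ u) with hb
      have hv : |2 * u - rsgn b| ≤ 1 := by
        rw [abs_le] at hu ⊢
        rcases le_or_gt 0 u with h | h
        · have hb' : b = true := by simp [hb, h]
          rw [hb']; simp only [rsgn, if_true]; constructor <;> linarith
        · have hb' : b = false := by simp [hb, not_le.mpr h]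
          rw [hb']; simp only [rsgn, if_false, Bool.false_eq_true]; constructor <;> linarith
      obtain ⟨s', hs'⟩ := ih (2 * u - rsgn b) hv
      refine ⟨(Fin.cons b s' : Fin (m+1) → Bool), ?_⟩
      have key : u - ∑ j : Fin (m+1), rsgn ((Fin.cons b s' : Fin (m+1) → Bool) j) * (2⁻¹:ℝ)^(j.val+1)
          = (2*u - rsgn b - ∑ j : Fin m, rsgn (s' j) * (2⁻¹:ℝ)^(j.val+1)) / 2 := by
        rw [Fin.sum_univ_succ]
        simp only [Fin.cons_zero, Fin.cons_succ, Fin.val_succ, Fin.val_zero]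
        have hsum : ∑ x : Fin m, rsgn (s' x) * (2⁻¹:ℝ)^(x.val+1+1)
            = (∑ j : Fin m, rsgn (s' j) * (2⁻¹:ℝ)^(j.val+1))/2 := by
          rw [Finset.sum_div]
          apply Finset.sum_congr rfl
          intro j _
          ring
        rw [hsum]
        ring
      rw [key, abs_div]
      have : |(2:ℝ)| = 2 := by norm_num
      rw [this, pow_succ]
      have h2 : |2*u - rsgn b - ∑ j : Fin m, rsgn (s' j) * (2⁻¹:ℝ)^(j.val+1)| ≤ (2⁻¹:ℝ)^m := hs'
      rw [div_le_iff₀ (by norm_num : (0:ℝ) < 2)]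
      calc |2*u - rsgn b - ∑ j : Fin m, rsgn (s' j) * (2⁻¹:ℝ)^(j.val+1)| ≤ (2⁻¹:ℝ)^m := hs'
        _ = (2⁻¹:ℝ)^m * 2⁻¹ * 2 := by ring

lemma complex_digit (m : ℕ) (a : ℂ) (ha : ‖a‖ ≤ 1) :
    ∃ s t : Fin m → Bool,
      ‖a - ∑ j : Fin m, ((2⁻¹:ℂ) ^ (j.val+1) * sgn (s j)
        + (2⁻¹:ℂ) ^ (j.val+1) * Complex.I * sgn (t j))‖ ≤ 2 * (2⁻¹:ℝ)^m := by
  have hre : |a.re| ≤ 1 := (Complex.abs_re_le_norm a).trans ha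
  have him : |a.im| ≤ 1 := (Complex.abs_im_le_norm a).trans ha
  obtain ⟨s, hs⟩ := digit_expand m a.re hre
  obtain ⟨t, ht⟩ := digit_expand m a.im him
  refine ⟨s, t, ?_⟩
  have hsum : (∑ j : Fin m, ((2⁻¹:ℂ) ^ (j.val+1) * sgn (s j)
        + (2⁻¹:ℂ) ^ (j.val+1) * Complex.I * sgn (t j)))
      = ((∑ j : Fin m, rsgn (s j) * (2⁻¹:ℝ)^(j.val+1) : ℝ) : ℂ)
        + ((∑ j : Fin m, rsgn (t j) * (2⁻¹:ℝ)^(j.val+1) : ℝ) : ℂ) * Complex.I := by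
    rw [Finset.sum_add_distrib]
    congr 1
    · push_cast
      apply Finset.sum_congr rfl
      intro j _
      rw [sgn_eq_rsgn]
      push_cast
      ring
    · push_cast
      rw [Finset.sum_mul]
      apply Finset.sum_congr rfl
      intro j _
      rw [sgn_eq_rsgn]
      push_cast
      ring
  rw [hsum]
  set A := (∑ j : Fin m, rsgn (s j) * (2⁻¹:ℝ)^(j.val+1) : ℝ)
  set B := (∑ j : Fin m, rsgn (t j) * (2⁻¹:ℝ)^(j.val+1) : ℝ)
  have : a - ((A:ℂ) + (B:ℂ)*Complex.I) = ((a.re - A : ℝ):ℂ) + ((a.im - B : ℝ):ℂ) * Complex.I := by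
    apply Complex.ext <;> simp
  rw [this]
  calc ‖((a.re - A : ℝ):ℂ) + ((a.im - B : ℝ):ℂ) * Complex.I‖
      ≤ ‖((a.re - A : ℝ):ℂ)‖ + ‖((a.im - B : ℝ):ℂ) * Complex.I‖ := by
        apply norm_add_le
    _ = |a.re - A| + |a.im - B| := by
        simp only [norm_mul, Complex.norm_I, mul_one, Complex.norm_real, Real.norm_eq_abs]
    _ ≤ (2⁻¹:ℝ)^m + (2⁻¹:ℝ)^m := add_le_add hs ht
    _ = 2 * (2⁻¹:ℝ)^m := by ring

lemma xor_involutive {n : ℕ} (σ : Fin n → Bool) :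
    Function.Involutive (fun θ : Fin n → Bool => fun k => σ k == θ k) := by
  intro θ
  funext k
  show (σ k == (σ k == θ k)) = θ k
  cases σ k <;> cases θ k <;> rfl

lemma sum_xor_eq {n : ℕ} (σ : Fin n → Bool) (f : (Fin n → Bool) → ℝ) :
    ∑ θ : Fin n → Bool, f (fun k => σ k == θ k) = ∑ θ : Fin n → Bool, f θ :=
  Function.Bijective.sum_comp (xor_involutive σ).bijective f

lemma geom_bound {β : ℝ} (h0 : 0 ≤ β) (h1 : β < 1) (m : ℕ) :
    ∑ j : Fin m, β ^ (j.val + 1) ≤ β / (1 - β) := by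
  have h1' : 0 < 1 - β := by linarith
  have hgs : ∑ j ∈ Finset.range m, β ^ j ≤ (1 - β)⁻¹ := by
    rw [geom_sum_eq (by linarith : β ≠ 1) m]
    have e : (β ^ m - 1) / (β - 1) = (1 - β ^ m) / (1 - β) := by
      rw [← neg_sub (1:ℝ) β, ← neg_sub (1:ℝ) (β^m), neg_div_neg_eq]
    rw [e, div_le_iff₀ h1', inv_mul_cancel₀ h1'.ne']
    linarith [pow_nonneg h0 m]
  have hst : ∑ j : Fin m, β ^ (j.val + 1) = β * ∑ j ∈ Finset.range m, β ^ j := by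
    rw [Finset.mul_sum, ← Fin.sum_univ_eq_sum_range (fun j => β * β ^ j)]
    apply Finset.sum_congr rfl
    intro j _
    ring
  rw [hst, div_eq_mul_inv]
  exact mul_le_mul_of_nonneg_left hgs h0

lemma pow_rpow_comm {x : ℝ} (hx : 0 ≤ x) (j : ℕ) (z : ℝ) : (x ^ j) ^ z = (x ^ z) ^ j := by
  rw [← Real.rpow_natCast x j, ← Real.rpow_mul hx, mul_comm, Real.rpow_mul hx,
    Real.rpow_natCast]

lemma real_rpow_add_le {x y s : ℝ} (hx : 0 ≤ x) (hy : 0 ≤ y) (hs0 : 0 ≤ s) (hs1 : s ≤ 1) :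
    (x + y) ^ s ≤ x ^ s + y ^ s := by
  have h := NNReal.rpow_add_le_add_rpow (x.toNNReal) (y.toNNReal) hs0 hs1
  calc (x + y) ^ s = (((x.toNNReal + y.toNNReal : ℝ≥0)) : ℝ) ^ s := by
        rw [NNReal.coe_add, Real.coe_toNNReal x hx, Real.coe_toNNReal y hy]
    _ = ((((x.toNNReal + y.toNNReal : ℝ≥0)) ^ s : ℝ≥0) : ℝ) := by
        rw [NNReal.coe_rpow]
    _ ≤ (((x.toNNReal ^ s + y.toNNReal ^ s : ℝ≥0)) : ℝ) := NNReal.coe_le_coe.mpr h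
    _ = x ^ s + y ^ s := by
        rw [NNReal.coe_add, NNReal.coe_rpow, NNReal.coe_rpow, Real.coe_toNNReal x hx,
          Real.coe_toNNReal y hy]

lemma sum_rpow_le_rpow_sum' {ι : Type*} (u : Finset ι) (f : ι → ℝ) (hf : ∀ i, 0 ≤ f i)
    {s : ℝ} (hs0 : 0 < s) (hs1 : s ≤ 1) :
    (∑ i ∈ u, f i) ^ s ≤ ∑ i ∈ u, f i ^ s := by
  classical
  induction u using Finset.cons_induction with
  | empty => simp [Real.zero_rpow hs0.ne']
  | cons a u ha ih =>
      rw [Finset.sum_cons, Finset.sum_cons]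
      calc (f a + ∑ i ∈ u, f i) ^ s ≤ f a ^ s + (∑ i ∈ u, f i) ^ s :=
            real_rpow_add_le (hf a) (Finset.sum_nonneg fun i _ => hf i) hs0.le hs1
        _ ≤ f a ^ s + ∑ i ∈ u, f i ^ s := by linarith

lemma pointwise_decomp (h : IsRNorm r ν) (hr0 : 0 < r) {n : ℕ} (x : Fin n → X) (a : Fin n → ℂ)
    (ha : ∀ k, ‖a k‖ ≤ 1) (m : ℕ) :
    ∃ σ τ : Fin m → Fin n → Bool, ∀ θ : Fin n → Bool,
      ν (∑ k, sgn (θ k) • (a k • x k)) ^ r ≤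
        (∑ j : Fin m, ((2⁻¹:ℝ) ^ r) ^ (j.val+1) * ν (∑ k, sgn (σ j k == θ k) • x k) ^ r)
        + (∑ j : Fin m, ((2⁻¹:ℝ) ^ r) ^ (j.val+1) * ν (∑ k, sgn (τ j k == θ k) • x k) ^ r)
        + (2 * (2⁻¹:ℝ)^m) ^ r * ∑ k, ν (x k) ^ r := by
  classical
  choose s t hst using fun k => complex_digit m (a k) (ha k)
  refine ⟨fun j k => s k j, fun j k => t k j, ?_⟩
  intro θ
  set ρ : Fin n → ℂ := fun k => a k - ∑ j : Fin m, ((2⁻¹:ℂ)^(j.val+1) * sgn (s k j)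
      + (2⁻¹:ℂ)^(j.val+1)*Complex.I*sgn (t k j)) with hρ
  have hρ_le : ∀ k, ‖ρ k‖ ≤ 2 * (2⁻¹:ℝ)^m := fun k => hst k
  have hdec : ∑ k, sgn (θ k) • (a k • x k) =
      ((∑ j : Fin m, ((2⁻¹:ℂ)^(j.val+1)) • (∑ k, sgn (s k j == θ k) • x k))
      + (∑ j : Fin m, ((2⁻¹:ℂ)^(j.val+1) * Complex.I) • (∑ k, sgn (t k j == θ k) • x k)))
      + ∑ k, (ρ k * sgn (θ k)) • x k := by
    simp_rw [Finset.smul_sum, smul_smul]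
    rw [Finset.sum_comm (γ := Fin m) (s := Finset.univ) (t := Finset.univ),
      Finset.sum_comm (γ := Fin m) (s := Finset.univ) (t := Finset.univ),
      ← Finset.sum_add_distrib, ← Finset.sum_add_distrib]
    apply Finset.sum_congr rfl
    intro k _
    rw [← Finset.sum_smul, ← Finset.sum_smul, ← add_smul, ← add_smul]
    congr 1
    simp_rw [← sgn_mul_sgn]
    have hak : a k = (∑ j : Fin m, ((2⁻¹:ℂ)^(j.val+1) * sgn (s k j)
        + (2⁻¹:ℂ)^(j.val+1)*Complex.I*sgn (t k j))) + ρ k := by rw [hρ]; ring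
    rw [hak]
    have hS : sgn (θ k) * (∑ j : Fin m, ((2⁻¹:ℂ)^(j.val+1) * sgn (s k j)
        + (2⁻¹:ℂ)^(j.val+1)*Complex.I*sgn (t k j)))
        = (∑ j : Fin m, (2⁻¹:ℂ)^(j.val+1) * (sgn (s k j) * sgn (θ k)))
          + ∑ j : Fin m, (2⁻¹:ℂ)^(j.val+1) * Complex.I * (sgn (t k j) * sgn (θ k)) := by
      rw [Finset.mul_sum, ← Finset.sum_add_distrib]
      apply Finset.sum_congr rfl
      intro j _
      ring
    rw [mul_add, hS]
    ring
  rw [hdec]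
  have habs : ∀ y : X, 0 ≤ ν y := h.1
  calc ν (_ + _) ^ r ≤ ν ((∑ j : Fin m, ((2⁻¹:ℂ)^(j.val+1)) • (∑ k, sgn (s k j == θ k) • x k))
      + (∑ j : Fin m, ((2⁻¹:ℂ)^(j.val+1) * Complex.I) • (∑ k, sgn (t k j == θ k) • x k))) ^ r
      + ν (∑ k, (ρ k * sgn (θ k)) • x k) ^ r := h.2.2.2 _ _
    _ ≤ (ν (∑ j : Fin m, ((2⁻¹:ℂ)^(j.val+1)) • (∑ k, sgn (s k j == θ k) • x k)) ^ r
      + ν (∑ j : Fin m, ((2⁻¹:ℂ)^(j.val+1) * Complex.I) • (∑ k, sgn (t k j == θ k) • x k)) ^ r)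
      + ν (∑ k, (ρ k * sgn (θ k)) • x k) ^ r := by
        have := h.2.2.2 (∑ j : Fin m, ((2⁻¹:ℂ)^(j.val+1)) • (∑ k, sgn (s k j == θ k) • x k))
          (∑ j : Fin m, ((2⁻¹:ℂ)^(j.val+1) * Complex.I) • (∑ k, sgn (t k j == θ k) • x k))
        linarith
    _ ≤ (∑ j : Fin m, ((2⁻¹:ℝ) ^ r) ^ (j.val+1) * ν (∑ k, sgn (s k j == θ k) • x k) ^ r)
        + (∑ j : Fin m, ((2⁻¹:ℝ) ^ r) ^ (j.val+1) * ν (∑ k, sgn (t k j == θ k) • x k) ^ r)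
        + (2 * (2⁻¹:ℝ)^m) ^ r * ∑ k, ν (x k) ^ r := by
        have hA : ν (∑ j : Fin m, ((2⁻¹:ℂ)^(j.val+1)) • (∑ k, sgn (s k j == θ k) • x k)) ^ r
            ≤ ∑ j : Fin m, ((2⁻¹:ℝ) ^ r) ^ (j.val+1) * ν (∑ k, sgn (s k j == θ k) • x k) ^ r := by
          refine (h.sum_rpow_le hr0 _ _).trans ?_
          apply Finset.sum_le_sum
          intro j _
          rw [h.2.2.1, Real.mul_rpow (norm_nonneg _) (habs _)]
          have e : ‖(2⁻¹:ℂ)^(j.val+1)‖ = (2⁻¹:ℝ)^(j.val+1) := by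
            rw [norm_pow, norm_inv, Complex.norm_two]
          rw [e, pow_rpow_comm (by norm_num : (0:ℝ) ≤ 2⁻¹) (j.val+1) r]
        have hB : ν (∑ j : Fin m, ((2⁻¹:ℂ)^(j.val+1) * Complex.I) •
              (∑ k, sgn (t k j == θ k) • x k)) ^ r
            ≤ ∑ j : Fin m, ((2⁻¹:ℝ) ^ r) ^ (j.val+1) * ν (∑ k, sgn (t k j == θ k) • x k) ^ r := by
          refine (h.sum_rpow_le hr0 _ _).trans ?_
          apply Finset.sum_le_sum
          intro j _
          rw [h.2.2.1, Real.mul_rpow (norm_nonneg _) (habs _)]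
          have e : ‖(2⁻¹:ℂ)^(j.val+1) * Complex.I‖ = (2⁻¹:ℝ)^(j.val+1) := by
            rw [norm_mul, Complex.norm_I, mul_one, norm_pow, norm_inv, Complex.norm_two]
          rw [e, pow_rpow_comm (by norm_num : (0:ℝ) ≤ 2⁻¹) (j.val+1) r]
        have hC : ν (∑ k, (ρ k * sgn (θ k)) • x k) ^ r
            ≤ (2 * (2⁻¹:ℝ)^m) ^ r * ∑ k, ν (x k) ^ r := by
          refine (h.sum_rpow_le hr0 _ _).trans ?_
          rw [Finset.mul_sum]
          apply Finset.sum_le_sum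
          intro k _
          rw [h.2.2.1, Real.mul_rpow (norm_nonneg _) (habs _)]
          apply mul_le_mul_of_nonneg_right _ (Real.rpow_nonneg (habs _) r)
          apply Real.rpow_le_rpow (norm_nonneg _) _ hr0.le
          rw [norm_mul, abs_sgn, mul_one]
          exact hρ_le k
        exact add_le_add (add_le_add hA hB) hC

lemma nu_neg (h : IsRNorm r ν) (y : X) : ν (-y) = ν y := by
  rw [← neg_one_smul ℂ y, h.2.2.1]
  simp

lemma nu_single_le (h : IsRNorm r ν) (hr0 : 0 < r) {n : ℕ} (x : Fin n → X) (k : Fin n) :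
    ν (x k) ^ r ≤ ν (∑ k', sgn ((fun _ => true) k') • x k') ^ r
      + ν (∑ k', sgn (Function.update (fun _ => true) k false k') • x k') ^ r := by
  classical
  set θt : Fin n → Bool := fun _ => true with hθt
  set θ' : Fin n → Bool := Function.update θt k false with hθ'
  have hdiff : (∑ k', sgn (θt k') • x k') - (∑ k', sgn (θ' k') • x k') = (2:ℂ) • x k := by
    rw [← Finset.sum_sub_distrib]
    rw [Finset.sum_eq_single k]
    · rw [hθ']
      simp only [Function.update_self, hθt]
      rw [← sub_smul]
      norm_num [sgn]
    · intro k' _ hk'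
      rw [hθ', Function.update_of_ne hk']
      simp
    · intro hk
      exact absurd (Finset.mem_univ k) hk
  have hxk : x k = (2⁻¹:ℂ) • ((∑ k', sgn (θt k') • x k') - (∑ k', sgn (θ' k') • x k')) := by
    rw [hdiff, smul_smul]
    norm_num
  have h1 : ν (x k) ≤ ν ((∑ k', sgn (θt k') • x k') - (∑ k', sgn (θ' k') • x k')) := by
    rw [hxk, h.2.2.1]
    have := h.1 ((∑ k', sgn (θt k') • x k') - (∑ k', sgn (θ' k') • x k'))
    rw [norm_inv, Complex.norm_two]
    linarith
  calc ν (x k) ^ r ≤ ν ((∑ k', sgn (θt k') • x k') - (∑ k', sgn (θ' k') • x k')) ^ r :=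
        Real.rpow_le_rpow (h.1 _) h1 hr0.le
    _ = ν ((∑ k', sgn (θt k') • x k') + (-(∑ k', sgn (θ' k') • x k'))) ^ r := by
        rw [sub_eq_add_neg]
    _ ≤ ν (∑ k', sgn (θt k') • x k') ^ r + ν (-(∑ k', sgn (θ' k') • x k')) ^ r := h.2.2.2 _ _
    _ = ν (∑ k', sgn (θt k') • x k') ^ r + ν (∑ k', sgn (θ' k') • x k') ^ r := by
        rw [nu_neg h]

lemma exists_m (r : ℝ) (hr0 : 0 < r) (n : ℕ) {c : ℝ} (hc : 0 < c) :
    ∃ m : ℕ, (2*(2⁻¹:ℝ)^m)^r * (2*(n:ℝ)) ≤ c := by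
  set β : ℝ := (2⁻¹:ℝ) ^ r with hβ
  have hβ0 : 0 ≤ β := Real.rpow_nonneg (by norm_num) r
  have hβ1 : β < 1 := Real.rpow_lt_one (by norm_num) (by norm_num) hr0
  have h2r : (0:ℝ) < (2:ℝ)^(r:ℝ) := Real.rpow_pos_of_pos two_pos r
  obtain ⟨m, hm0⟩ := exists_pow_lt_of_lt_one
    (x := c/((2:ℝ)^(r:ℝ)*(2*(n:ℝ)+1))) (by positivity) hβ1
  refine ⟨m, ?_⟩
  have he : (2*(2⁻¹:ℝ)^m)^r = (2:ℝ)^(r:ℝ) * β^m := by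
    rw [Real.mul_rpow (by norm_num) (pow_nonneg (by norm_num) m), hβ,
      pow_rpow_comm (by norm_num : (0:ℝ) ≤ 2⁻¹) m r]
  rw [he]
  have hβm : 0 ≤ β^m := pow_nonneg hβ0 m
  have hd : (0:ℝ) < (2:ℝ)^(r:ℝ)*(2*(n:ℝ)+1) := by positivity
  have h2 : β^m * ((2:ℝ)^(r:ℝ)*(2*(n:ℝ)+1)) < c := by
    rw [div_eq_mul_inv] at hm0
    calc β^m * ((2:ℝ)^(r:ℝ)*(2*(n:ℝ)+1))
        < c * ((2:ℝ)^(r:ℝ)*(2*(n:ℝ)+1))⁻¹ * ((2:ℝ)^(r:ℝ)*(2*(n:ℝ)+1)) := by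
          exact mul_lt_mul_of_pos_right hm0 hd
      _ = c := by field_simp
  nlinarith [mul_nonneg (mul_nonneg h2r.le hβm) (by positivity : (0:ℝ) ≤ 2*(n:ℝ))]

/-- For `0 < r ≤ 1` and `0 < p ≤ ∞` there is `C = C(r,p)` such that for
every `r`-normed space `X`, all `x_1, …, x_n ∈ X` and scalars `|a_k| ≤ 1`:
`‖∑ a_k ε_k x_k‖_p ≤ C ‖∑ ε_k x_k‖_p`. -/
theorem statement13 (r : ℝ) (hr0 : 0 < r) (hr1 : r ≤ 1) (p : ℝ≥0∞) (hp : 0 < p) :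
    ∃ C : ℝ, 0 < C ∧
      ∀ (X : Type) [AddCommGroup X] [Module ℂ X] (ν : X → ℝ), IsRNorm r ν →
        ∀ (n : ℕ) (x : Fin n → X) (a : Fin n → ℂ), (∀ k, ‖a k‖ ≤ 1) →
          radMean ν p (fun k => a k • x k) ≤ C * radMean ν p x := by
  classical
  rcases eq_or_ne p ⊤ with hpt | hpt
  · subst hpt
    set β : ℝ := (2⁻¹:ℝ) ^ r with hβ
    have hβ0 : 0 ≤ β := Real.rpow_nonneg (by norm_num) r
    have hβ1 : β < 1 := Real.rpow_lt_one (by norm_num) (by norm_num) hr0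
    have hg0 : 0 ≤ β/(1-β) := div_nonneg hβ0 (by linarith)
    set K : ℝ := 2*(β/(1-β)) + 2 with hK
    clear_value β
    clear_value K
    have hK0 : 0 < K := by rw [hK]; linarith
    refine ⟨K ^ (1/r), Real.rpow_pos_of_pos hK0 _, ?_⟩
    intro X _ _ ν hν n x a ha
    obtain ⟨m, hm⟩ := exists_m r hr0 n one_pos
    obtain ⟨σ, τ, hpw⟩ := pointwise_decomp hν hr0 x a ha m
    rw [← hβ] at hpw
    set F : (Fin n → Bool) → ℝ := fun θ => ν (∑ k, sgn (θ k) • x k) with hF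
    have hbdd : BddAbove (Set.range F) := (Set.finite_range F).bddAbove
    set B : ℝ := ⨆ θ, F θ with hB
    have hFB : ∀ θ, F θ ≤ B := fun θ => le_ciSup hbdd θ
    have hFnn : ∀ θ, 0 ≤ F θ := fun θ => hν.1 _
    have hB0 : 0 ≤ B := le_trans (hFnn (fun _ => true)) (hFB _)
    have hBr : ∀ θ : Fin n → Bool, F θ ^ r ≤ B ^ r :=
      fun θ => Real.rpow_le_rpow (hFnn θ) (hFB θ) hr0.le
    have hxk : ∀ k, ν (x k) ^ r ≤ 2 * B ^ r := by
      intro k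
      refine (nu_single_le hν hr0 x k).trans ?_
      have h1 : ν (∑ k', sgn ((fun _ => true : Fin n → Bool) k') • x k') ^ r ≤ B ^ r :=
        hBr (fun _ => true)
      have h2 : ν (∑ k', sgn (Function.update (fun _ => true : Fin n → Bool) k false k') • x k')
          ^ r ≤ B ^ r := hBr (Function.update (fun _ => true) k false)
      linarith
    have hmain : ∀ θ : Fin n → Bool, ν (∑ k, sgn (θ k) • (a k • x k)) ≤ K ^ (1/r) * B := by
      intro θ
      have h1 : ν (∑ k, sgn (θ k) • (a k • x k)) ^ r ≤ K * B ^ r := by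
        refine (hpw θ).trans ?_
        have hs1 : ∑ j : Fin m, β ^ (j.val+1) * ν (∑ k, sgn (σ j k == θ k) • x k) ^ r
            ≤ (β/(1-β)) * B ^ r := by
          calc ∑ j : Fin m, β ^ (j.val+1) * ν (∑ k, sgn (σ j k == θ k) • x k) ^ r
              ≤ ∑ j : Fin m, β ^ (j.val+1) * B ^ r := by
                apply Finset.sum_le_sum
                intro j _
                exact mul_le_mul_of_nonneg_left (hBr (fun k => σ j k == θ k)) (pow_nonneg hβ0 _)
            _ = (∑ j : Fin m, β ^ (j.val+1)) * B ^ r := by rw [Finset.sum_mul]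
            _ ≤ (β/(1-β)) * B ^ r :=
                mul_le_mul_of_nonneg_right (geom_bound hβ0 hβ1 m) (Real.rpow_nonneg hB0 r)
        have hs2 : ∑ j : Fin m, β ^ (j.val+1) * ν (∑ k, sgn (τ j k == θ k) • x k) ^ r
            ≤ (β/(1-β)) * B ^ r := by
          calc ∑ j : Fin m, β ^ (j.val+1) * ν (∑ k, sgn (τ j k == θ k) • x k) ^ r
              ≤ ∑ j : Fin m, β ^ (j.val+1) * B ^ r := by
                apply Finset.sum_le_sum
                intro j _
                exact mul_le_mul_of_nonneg_left (hBr (fun k => τ j k == θ k)) (pow_nonneg hβ0 _)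
            _ = (∑ j : Fin m, β ^ (j.val+1)) * B ^ r := by rw [Finset.sum_mul]
            _ ≤ (β/(1-β)) * B ^ r :=
                mul_le_mul_of_nonneg_right (geom_bound hβ0 hβ1 m) (Real.rpow_nonneg hB0 r)
        have hs3 : (2*(2⁻¹:ℝ)^m)^r * ∑ k, ν (x k) ^ r ≤ B ^ r := by
          calc (2*(2⁻¹:ℝ)^m)^r * ∑ k, ν (x k) ^ r
              ≤ (2*(2⁻¹:ℝ)^m)^r * ((n:ℝ) * (2 * B ^ r)) := by
                apply mul_le_mul_of_nonneg_left _ (Real.rpow_nonneg (by positivity) r)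
                calc ∑ k, ν (x k) ^ r ≤ ∑ _k : Fin n, 2 * B ^ r :=
                      Finset.sum_le_sum fun k _ => hxk k
                  _ = (n:ℝ) * (2*B^r) := by
                      rw [Finset.sum_const, Finset.card_univ, Fintype.card_fin, nsmul_eq_mul]
            _ = ((2*(2⁻¹:ℝ)^m)^r * (2*(n:ℝ))) * B ^ r := by ring
            _ ≤ 1 * B ^ r := mul_le_mul_of_nonneg_right hm (Real.rpow_nonneg hB0 r)
            _ = B ^ r := one_mul _
        rw [hK]
        linarith [Real.rpow_nonneg hB0 r]
      have h2 : ν (∑ k, sgn (θ k) • (a k • x k))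
          = (ν (∑ k, sgn (θ k) • (a k • x k)) ^ r) ^ (1/r) := by
        rw [← Real.rpow_mul (hν.1 _), mul_one_div_cancel hr0.ne', Real.rpow_one]
      rw [h2]
      calc (ν (∑ k, sgn (θ k) • (a k • x k)) ^ r) ^ (1/r) ≤ (K * B ^ r) ^ (1/r) :=
            Real.rpow_le_rpow (Real.rpow_nonneg (hν.1 _) r) h1 (by positivity)
        _ = K ^ (1/r) * (B ^ r) ^ (1/r) := Real.mul_rpow hK0.le (Real.rpow_nonneg hB0 r)
        _ = K ^ (1/r) * B := by
            rw [← Real.rpow_mul hB0, mul_one_div_cancel hr0.ne', Real.rpow_one]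
    unfold radMean
    rw [if_pos rfl, if_pos rfl]
    exact ciSup_le fun θ => hmain θ
  · -- p ≠ ⊤
    have hq0 : 0 < p.toReal := ENNReal.toReal_pos hp.ne' hpt
    set q : ℝ := p.toReal with hq
    set s : ℝ := q / r with hs
    have hs0 : 0 < s := div_pos hq0 hr0
    have hrs : r * s = q := by rw [hs]; field_simp
    set βr : ℝ := (2⁻¹:ℝ) ^ r with hβr
    set βq : ℝ := (2⁻¹:ℝ) ^ q with hβq
    have hβr0 : 0 ≤ βr := Real.rpow_nonneg (by norm_num) r
    have hβr1 : βr < 1 := Real.rpow_lt_one (by norm_num) (by norm_num) hr0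
    have hβq0 : 0 ≤ βq := Real.rpow_nonneg (by norm_num) q
    have hβq1 : βq < 1 := Real.rpow_lt_one (by norm_num) (by norm_num) hq0
    have hβrs : βr ^ s = βq := by
      rw [hβr, hβq, ← Real.rpow_mul (by norm_num : (0:ℝ) ≤ 2⁻¹) r s, hrs]
    set Wr : ℝ := 2*(βr/(1-βr)) + 1 with hWr
    set Wq : ℝ := 2*(βq/(1-βq)) + 1 with hWq
    have hgr0 : 0 ≤ βr/(1-βr) := div_nonneg hβr0 (by linarith)
    have hgq0 : 0 ≤ βq/(1-βq) := div_nonneg hβq0 (by linarith)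
    have hWr1 : 1 ≤ Wr := by rw [hWr]; linarith
    have hWq1 : 1 ≤ Wq := by rw [hWq]; linarith
    set K : ℝ := if 1 ≤ s then Wr ^ s else Wq with hKdef
    have hK1 : 1 ≤ K := by
      rw [hKdef]
      split_ifs with h
      · exact Real.one_le_rpow hWr1 hs0.le
      · exact hWq1
    have hK0 : 0 < K := by linarith
    refine ⟨K ^ (1/q), Real.rpow_pos_of_pos hK0 _, ?_⟩
    intro X _ _ ν hν n x a ha
    set F : (Fin n → Bool) → ℝ := fun θ => ν (∑ k, sgn (θ k) • x k) with hF
    have hFnn : ∀ θ, 0 ≤ F θ := fun θ => hν.1 _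
    set T : ℝ := ∑ θ : Fin n → Bool, F θ ^ q with hT
    have hT0 : 0 ≤ T :=
      Finset.sum_nonneg fun θ _ => Real.rpow_nonneg (hFnn θ) q
    have hFrT : ∀ θ, F θ ^ r ≤ T ^ (r/q) := by
      intro θ
      have h1 : F θ ^ q ≤ T := by
        rw [hT]
        exact Finset.single_le_sum (fun θ _ => Real.rpow_nonneg (hFnn θ) q) (Finset.mem_univ θ)
      have h2 : F θ ^ r = (F θ ^ q) ^ (r/q) := by
        rw [← Real.rpow_mul (hFnn θ)]
        congr 1
        field_simp
      rw [h2]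
      exact Real.rpow_le_rpow (Real.rpow_nonneg (hFnn θ) q) h1 (by positivity)
    have hxk : ∀ k, ν (x k) ^ r ≤ 2 * T ^ (r/q) := by
      intro k
      refine (nu_single_le hν hr0 x k).trans ?_
      have h1 : ν (∑ k', sgn ((fun _ => true : Fin n → Bool) k') • x k') ^ r ≤ T ^ (r/q) :=
        hFrT (fun _ => true)
      have h2 : ν (∑ k', sgn (Function.update (fun _ => true : Fin n → Bool) k false k') • x k')
          ^ r ≤ T ^ (r/q) := hFrT (Function.update (fun _ => true) k false)
      linarith
    have hc : (0:ℝ) < (((2:ℝ)^n)⁻¹) ^ (r/q) := Real.rpow_pos_of_pos (by positivity) _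
    obtain ⟨m, hm⟩ := exists_m r hr0 n hc
    obtain ⟨σ, τ, hpw⟩ := pointwise_decomp hν hr0 x a ha m
    rw [← hβr] at hpw
    set E : ℝ := (((2:ℝ)^n)⁻¹) ^ (r/q) * T ^ (r/q) with hE
    have hE0 : 0 ≤ E := mul_nonneg hc.le (Real.rpow_nonneg hT0 _)
    have hrem : (2*(2⁻¹:ℝ)^m)^r * ∑ k, ν (x k) ^ r ≤ E := by
      calc (2*(2⁻¹:ℝ)^m)^r * ∑ k, ν (x k) ^ r
          ≤ (2*(2⁻¹:ℝ)^m)^r * ((n:ℝ) * (2 * T ^ (r/q))) := by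
            apply mul_le_mul_of_nonneg_left _ (Real.rpow_nonneg (by positivity) r)
            calc ∑ k, ν (x k) ^ r ≤ ∑ _k : Fin n, 2 * T^(r/q) :=
                  Finset.sum_le_sum fun k _ => hxk k
              _ = (n:ℝ) * (2*T^(r/q)) := by
                  rw [Finset.sum_const, Finset.card_univ, Fintype.card_fin, nsmul_eq_mul]
        _ = ((2*(2⁻¹:ℝ)^m)^r * (2*(n:ℝ))) * T ^ (r/q) := by ring
        _ ≤ (((2:ℝ)^n)⁻¹) ^ (r/q) * T ^ (r/q) :=
            mul_le_mul_of_nonneg_right hm (Real.rpow_nonneg hT0 _)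
        _ = E := by rw [hE]
    set P : (Fin n → Bool) → ℝ := fun θ =>
      (∑ j : Fin m, βr ^ (j.val+1) * F (fun k => σ j k == θ k) ^ r)
      + (∑ j : Fin m, βr ^ (j.val+1) * F (fun k => τ j k == θ k) ^ r) + E with hP
    have hPnn : ∀ θ, 0 ≤ P θ := by
      intro θ
      apply add_nonneg (add_nonneg _ _) hE0 <;>
        exact Finset.sum_nonneg fun j _ =>
          mul_nonneg (pow_nonneg hβr0 _) (Real.rpow_nonneg (hFnn _) r)
    have hpw2 : ∀ θ : Fin n → Bool, ν (∑ k, sgn (θ k) • (a k • x k)) ^ r ≤ P θ := by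
      intro θ
      refine (hpw θ).trans ?_
      have e1 : (∑ j : Fin m, βr ^ (j.val+1) * ν (∑ k, sgn (σ j k == θ k) • x k) ^ r)
          = ∑ j : Fin m, βr ^ (j.val+1) * F (fun k => σ j k == θ k) ^ r := rfl
      have e2 : (∑ j : Fin m, βr ^ (j.val+1) * ν (∑ k, sgn (τ j k == θ k) • x k) ^ r)
          = ∑ j : Fin m, βr ^ (j.val+1) * F (fun k => τ j k == θ k) ^ r := rfl
      rw [hP, e1, e2]
      linarith [hrem]
    have hq_pow : ∀ (y : ℝ), 0 ≤ y → y ^ q = (y ^ r) ^ s := by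
      intro y hy
      rw [← Real.rpow_mul hy, hrs]
    have hswap : ∀ σ' : Fin m → Fin n → Bool,
        ∑ θ : Fin n → Bool, ∑ j : Fin m, βq ^ (j.val+1) * F (fun k => σ' j k == θ k) ^ q
          ≤ (βq/(1-βq)) * T := by
      intro σ'
      rw [Finset.sum_comm]
      have e3 : ∀ j : Fin m, ∑ θ : Fin n → Bool, βq ^ (j.val+1) * F (fun k => σ' j k == θ k) ^ q
          = βq ^ (j.val+1) * T := by
        intro j
        rw [← Finset.mul_sum]
        congr 1
        exact sum_xor_eq (σ' j) (fun θ => F θ ^ q)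
      calc ∑ j : Fin m, ∑ θ : Fin n → Bool, βq ^ (j.val+1) * F (fun k => σ' j k == θ k) ^ q
          = ∑ j : Fin m, βq ^ (j.val+1) * T := Finset.sum_congr rfl fun j _ => e3 j
        _ = (∑ j : Fin m, βq ^ (j.val+1)) * T := by rw [Finset.sum_mul]
        _ ≤ (βq/(1-βq)) * T := mul_le_mul_of_nonneg_right (geom_bound hβq0 hβq1 m) hT0
    have hEs : E ^ s = ((2:ℝ)^n)⁻¹ * T := by
      rw [hE, Real.mul_rpow hc.le (Real.rpow_nonneg hT0 _),
        ← Real.rpow_mul (by positivity : (0:ℝ) ≤ ((2:ℝ)^n)⁻¹), ← Real.rpow_mul hT0]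
      have h1 : (r/q)*s = 1 := by rw [hs]; field_simp
      rw [h1, Real.rpow_one, Real.rpow_one]
    have hEsum : ∑ _θ : Fin n → Bool, E ^ s = T := by
      rw [Finset.sum_const, Finset.card_univ]
      have hcard : Fintype.card (Fin n → Bool) = 2^n := by
        simp [Fintype.card_fun]
      rw [hcard, hEs, nsmul_eq_mul]
      push_cast
      rw [← mul_assoc, mul_inv_cancel₀ (by positivity : ((2:ℝ)^n) ≠ 0), one_mul]
    -- the key estimate in both cases
    have hkey : ∑ θ : Fin n → Bool, P θ ^ s ≤ K * T := by
      by_cases hcase : 1 ≤ s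
      · -- Jensen case
        have hKeq : K = Wr ^ s := by rw [hKdef, if_pos hcase]
        set w : (Fin m ⊕ Fin m) ⊕ Unit → ℝ := Sum.elim
          (Sum.elim (fun j : Fin m => βr^(j.val+1)) (fun j : Fin m => βr^(j.val+1)))
          (fun _ => (1:ℝ)) with hw
        set z : ((Fin m ⊕ Fin m) ⊕ Unit) → (Fin n → Bool) → ℝ := Sum.elim
          (Sum.elim (fun (j : Fin m) θ => F (fun k => σ j k == θ k) ^ r)
            (fun (j : Fin m) θ => F (fun k => τ j k == θ k) ^ r)) (fun _ _ => E) with hz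
        have hwnn : ∀ i, 0 ≤ w i := by
          rintro ((j|j)|u)
          · exact pow_nonneg hβr0 _
          · exact pow_nonneg hβr0 _
          · exact zero_le_one
        have hznn : ∀ i θ, 0 ≤ z i θ := by
          rintro ((j|j)|u) θ
          · exact Real.rpow_nonneg (hFnn _) r
          · exact Real.rpow_nonneg (hFnn _) r
          · exact hE0
        set W : ℝ := ∑ i, w i with hWdef
        have hWeq : W = (∑ j : Fin m, βr^(j.val+1)) + (∑ j : Fin m, βr^(j.val+1)) + 1 := by
          rw [hWdef, Fintype.sum_sum_type, Fintype.sum_sum_type]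
          simp [hw]
        have hgsum : 0 ≤ ∑ j : Fin m, βr^(j.val+1) :=
          Finset.sum_nonneg fun j _ => pow_nonneg hβr0 _
        have hW1 : 1 ≤ W := by rw [hWeq]; linarith
        have hW0 : 0 < W := by linarith
        have hWle : W ≤ Wr := by
          rw [hWeq, hWr]
          have g2 := geom_bound hβr0 hβr1 m
          linarith
        have hPz : ∀ θ, P θ = ∑ i, w i * z i θ := by
          intro θ
          rw [Fintype.sum_sum_type, Fintype.sum_sum_type]
          simp only [hw, hz, Sum.elim_inl, Sum.elim_inr, hP, one_mul]
          simp
        have hzT : ∀ i, ∑ θ : Fin n → Bool, z i θ ^ s ≤ T := by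
          rintro ((j|j)|u)
          · have e : ∀ θ : Fin n → Bool, z (Sum.inl (Sum.inl j)) θ ^ s
                = F (fun k => σ j k == θ k) ^ q := by
              intro θ
              show (F (fun k => σ j k == θ k) ^ r) ^ s = _
              rw [← hq_pow _ (hFnn _)]
            rw [Finset.sum_congr rfl fun θ _ => e θ,
              sum_xor_eq (σ j) (fun θ => F θ ^ q), ← hT]
          · have e : ∀ θ : Fin n → Bool, z (Sum.inl (Sum.inr j)) θ ^ s
                = F (fun k => τ j k == θ k) ^ q := by
              intro θ
              show (F (fun k => τ j k == θ k) ^ r) ^ s = _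
              rw [← hq_pow _ (hFnn _)]
            rw [Finset.sum_congr rfl fun θ _ => e θ,
              sum_xor_eq (τ j) (fun θ => F θ ^ q), ← hT]
          · have e : ∑ θ : Fin n → Bool, z (Sum.inr u) θ ^ s = ∑ _θ : Fin n → Bool, E ^ s := rfl
            rw [e, hEsum]
        have hjen : ∀ θ, P θ ^ s ≤ ∑ i, (w i / W) * (W ^ s * z i θ ^ s) := by
          intro θ
          have h1 : P θ = ∑ i, (w i / W) * (W * z i θ) := by
            rw [hPz θ]
            apply Finset.sum_congr rfl
            intro i _
            field_simp
          have h2 := Real.rpow_arith_mean_le_arith_mean_rpow Finset.univ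
            (fun i => w i / W) (fun i => W * z i θ)
            (fun i _ => div_nonneg (hwnn i) hW0.le)
            (by rw [← Finset.sum_div, ← hWdef, div_self hW0.ne'])
            (fun i _ => mul_nonneg hW0.le (hznn i θ)) hcase
          rw [h1]
          refine h2.trans (le_of_eq ?_)
          apply Finset.sum_congr rfl
          intro i _
          rw [Real.mul_rpow hW0.le (hznn i θ)]
        calc ∑ θ : Fin n → Bool, P θ ^ s
            ≤ ∑ θ : Fin n → Bool, ∑ i, (w i / W) * (W ^ s * z i θ ^ s) :=
              Finset.sum_le_sum fun θ _ => hjen θ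
          _ = ∑ i, ∑ θ : Fin n → Bool, (w i / W) * (W ^ s * z i θ ^ s) := Finset.sum_comm
          _ = ∑ i, (w i / W) * (W ^ s * ∑ θ : Fin n → Bool, z i θ ^ s) := by
              apply Finset.sum_congr rfl
              intro i _
              rw [← Finset.mul_sum, ← Finset.mul_sum]
          _ ≤ ∑ i, (w i / W) * (W ^ s * T) := by
              apply Finset.sum_le_sum
              intro i _
              exact mul_le_mul_of_nonneg_left
                (mul_le_mul_of_nonneg_left (hzT i) (Real.rpow_nonneg hW0.le s))
                (div_nonneg (hwnn i) hW0.le)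
          _ = (∑ i, w i / W) * (W ^ s * T) := by rw [Finset.sum_mul]
          _ = W ^ s * T := by rw [← Finset.sum_div, ← hWdef, div_self hW0.ne', one_mul]
          _ ≤ Wr ^ s * T := mul_le_mul_of_nonneg_right
              (Real.rpow_le_rpow hW0.le hWle hs0.le) hT0
          _ = K * T := by rw [hKeq]
      · -- subadditivity case
        have hs1 : s ≤ 1 := le_of_not_ge hcase
        have hKeq : K = Wq := by rw [hKdef, if_neg hcase]
        have hterm : ∀ θ : Fin n → Bool, P θ ^ s ≤
            (∑ j : Fin m, βq ^ (j.val+1) * F (fun k => σ j k == θ k) ^ q)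
            + (∑ j : Fin m, βq ^ (j.val+1) * F (fun k => τ j k == θ k) ^ q) + E ^ s := by
          intro θ
          have g1 : 0 ≤ ∑ j : Fin m, βr ^ (j.val+1) * F (fun k => σ j k == θ k) ^ r :=
            Finset.sum_nonneg fun j _ =>
              mul_nonneg (pow_nonneg hβr0 _) (Real.rpow_nonneg (hFnn _) r)
          have g2 : 0 ≤ ∑ j : Fin m, βr ^ (j.val+1) * F (fun k => τ j k == θ k) ^ r :=
            Finset.sum_nonneg fun j _ =>
              mul_nonneg (pow_nonneg hβr0 _) (Real.rpow_nonneg (hFnn _) r)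
          have step1 : P θ ^ s ≤
              ((∑ j : Fin m, βr ^ (j.val+1) * F (fun k => σ j k == θ k) ^ r)
              + (∑ j : Fin m, βr ^ (j.val+1) * F (fun k => τ j k == θ k) ^ r)) ^ s + E ^ s := by
            simp only [hP]
            exact real_rpow_add_le (add_nonneg g1 g2) hE0 hs0.le hs1
          have step2 : ((∑ j : Fin m, βr ^ (j.val+1) * F (fun k => σ j k == θ k) ^ r)
              + (∑ j : Fin m, βr ^ (j.val+1) * F (fun k => τ j k == θ k) ^ r)) ^ s
              ≤ (∑ j : Fin m, βr ^ (j.val+1) * F (fun k => σ j k == θ k) ^ r) ^ s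
              + (∑ j : Fin m, βr ^ (j.val+1) * F (fun k => τ j k == θ k) ^ r) ^ s :=
            real_rpow_add_le g1 g2 hs0.le hs1
          have step3 : (∑ j : Fin m, βr ^ (j.val+1) * F (fun k => σ j k == θ k) ^ r) ^ s
              ≤ ∑ j : Fin m, βq ^ (j.val+1) * F (fun k => σ j k == θ k) ^ q := by
            refine (sum_rpow_le_rpow_sum' Finset.univ _ (fun j =>
              mul_nonneg (pow_nonneg hβr0 _) (Real.rpow_nonneg (hFnn _) r)) hs0 hs1).trans
              (le_of_eq ?_)
            apply Finset.sum_congr rfl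
            intro j _
            rw [Real.mul_rpow (pow_nonneg hβr0 _) (Real.rpow_nonneg (hFnn _) r),
              pow_rpow_comm hβr0 (j.val+1) s, hβrs,
              ← hq_pow (F (fun k => σ j k == θ k)) (hFnn _)]
          have step4 : (∑ j : Fin m, βr ^ (j.val+1) * F (fun k => τ j k == θ k) ^ r) ^ s
              ≤ ∑ j : Fin m, βq ^ (j.val+1) * F (fun k => τ j k == θ k) ^ q := by
            refine (sum_rpow_le_rpow_sum' Finset.univ _ (fun j =>
              mul_nonneg (pow_nonneg hβr0 _) (Real.rpow_nonneg (hFnn _) r)) hs0 hs1).trans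
              (le_of_eq ?_)
            apply Finset.sum_congr rfl
            intro j _
            rw [Real.mul_rpow (pow_nonneg hβr0 _) (Real.rpow_nonneg (hFnn _) r),
              pow_rpow_comm hβr0 (j.val+1) s, hβrs,
              ← hq_pow (F (fun k => τ j k == θ k)) (hFnn _)]
          linarith
        calc ∑ θ : Fin n → Bool, P θ ^ s
            ≤ ∑ θ : Fin n → Bool,
              ((∑ j : Fin m, βq ^ (j.val+1) * F (fun k => σ j k == θ k) ^ q)
              + (∑ j : Fin m, βq ^ (j.val+1) * F (fun k => τ j k == θ k) ^ q) + E ^ s) :=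
              Finset.sum_le_sum fun θ _ => hterm θ
          _ = (∑ θ : Fin n → Bool, ∑ j : Fin m, βq ^ (j.val+1) * F (fun k => σ j k == θ k) ^ q)
              + (∑ θ : Fin n → Bool, ∑ j : Fin m, βq ^ (j.val+1) * F (fun k => τ j k == θ k) ^ q)
              + ∑ _θ : Fin n → Bool, E ^ s := by
              rw [Finset.sum_add_distrib, Finset.sum_add_distrib]
          _ ≤ (βq/(1-βq))*T + (βq/(1-βq))*T + T :=
              add_le_add (add_le_add (hswap σ) (hswap τ)) (le_of_eq hEsum)
          _ = Wq * T := by rw [hWq]; ring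
          _ = K * T := by rw [hKeq]
    have hTa : ∑ θ : Fin n → Bool, ν (∑ k, sgn (θ k) • (a k • x k)) ^ q ≤ K * T := by
      refine le_trans ?_ hkey
      apply Finset.sum_le_sum
      intro θ _
      rw [hq_pow _ (hν.1 _)]
      exact Real.rpow_le_rpow (Real.rpow_nonneg (hν.1 _) r) (hpw2 θ) hs0.le
    -- conclude
    unfold radMean
    rw [if_neg hpt, if_neg hpt, ← hq]
    have eT : ∑ θ : Fin n → Bool, ν (∑ k, sgn (θ k) • x k) ^ q = T := rfl
    have eTa : (∑ θ : Fin n → Bool, ν (∑ k, sgn (θ k) • (fun k => a k • x k) k) ^ q)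
        = ∑ θ : Fin n → Bool, ν (∑ k, sgn (θ k) • (a k • x k)) ^ q := rfl
    rw [eT, eTa]
    have h2n : (0:ℝ) < 2 ^ n := by positivity
    calc ((∑ θ : Fin n → Bool, ν (∑ k, sgn (θ k) • (a k • x k)) ^ q) / 2 ^ n) ^ (1/q)
        ≤ ((K * T) / 2 ^ n) ^ (1/q) := by
          apply Real.rpow_le_rpow
          · apply div_nonneg _ h2n.le
            exact Finset.sum_nonneg fun θ _ => Real.rpow_nonneg (hν.1 _) q
          · exact div_le_div_of_nonneg_right hTa h2n.le
          · positivity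
      _ = (K * (T / 2 ^ n)) ^ (1/q) := by rw [mul_div_assoc]
      _ = K ^ (1/q) * (T / 2 ^ n) ^ (1/q) :=
          Real.mul_rpow hK0.le (div_nonneg hT0 h2n.le)

end
end
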